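/- arXiv:1807.06955 — 8 statements merged into one kernel-verified Lean document; each statement's English description precedes it below -/
import Mathlib

section
/- Let B ∈ M_k(ℂ)⊗M_k(ℂ) be a PPT matrix and let W_1,…,W_s ∈ M_k(ℂ) be orthogonal projections such that W_iW_j = 0 for i ≠ j, Σ_{i=1}^s W_i = Id, and the corner algebra W_iM_kW_i is left invariant by the map X ↦ G_B(X^t) for every i. Then B = Σ_{i=1}^s (W_i^t ⊗ W_i) B (W_i^t ⊗ W_i). -/
open scoped Kronecker ComplexOrder
open Matrix

noncomputable section

/-- `V` is an orthogonal projection. -/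
def IsOrthProj {n : Type*} [Fintype n] (V : Matrix n n ℂ) : Prop :=
  V.IsHermitian ∧ V * V = V

/-- The corner algebra `V M V` is left invariant by `T`. -/
def LeavesInv {n : Type*} [Fintype n] (T : Matrix n n ℂ → Matrix n n ℂ)
    (V : Matrix n n ℂ) : Prop :=
  ∀ X, T (V * X * V) = V * T (V * X * V) * V

/-- `T` sends positive semidefinite matrices to positive semidefinite matrices. -/
def IsPosMap {n p : Type*} [Fintype n] [Fintype p]
    (T : Matrix n n ℂ → Matrix p p ℂ) : Prop :=
  ∀ X, X.PosSemidef → (T X).PosSemidef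

/-- `T` is completely positive, i.e. it has a Kraus decomposition. -/
def IsCPMap {n : Type*} [Fintype n] (T : Matrix n n ℂ → Matrix n n ℂ) : Prop :=
  ∃ (r : ℕ) (A : Fin r → Matrix n n ℂ), ∀ X, T X = ∑ i, A i * X * (A i)ᴴ

/-- The restriction of `T` to the corner algebra of `V` is irreducible. -/
def IsIrredOn {n : Type*} [Fintype n] [DecidableEq n]
    (T : Matrix n n ℂ → Matrix n n ℂ) (V : Matrix n n ℂ) : Prop :=
  ∀ V' : Matrix n n ℂ, IsOrthProj V' →
    LinearMap.range V'.mulVecLin ≤ LinearMap.range V.mulVecLin →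
    LeavesInv T V' → V' = V ∨ V' = 0

/-- `l` is the spectral radius of the restriction of `T` to the corner of `V`. -/
def HasSpecRadOn {n : Type*} [Fintype n] (T : Matrix n n ℂ → Matrix n n ℂ)
    (V : Matrix n n ℂ) (l : ℝ) : Prop :=
  (∃ (μ : ℂ) (X : Matrix n n ℂ), X ≠ 0 ∧ V * X * V = X ∧ T X = μ • X ∧ ‖μ‖ = l) ∧
  ∀ (μ : ℂ) (X : Matrix n n ℂ), X ≠ 0 → V * X * V = X → T X = μ • X → ‖μ‖ ≤ l

/-- `G_A(X)`: the partial trace over the first factor of `(X ⊗ 1) A`; for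
`A = Σ Aᵢ ⊗ Bᵢ` this is `Σ tr(Aᵢ X) Bᵢ`. -/
def Gmap {n p : Type*} [Fintype n] [Fintype p]
    (A : Matrix (n × p) (n × p) ℂ) (X : Matrix n n ℂ) : Matrix p p ℂ :=
  Matrix.of fun j j' => ∑ i, ∑ l, X i l * A (l, j) (i, j')

/-- Partial transposition on the second tensor factor. -/
def ptr {n p : Type*} (A : Matrix (n × p) (n × p) ℂ) : Matrix (n × p) (n × p) ℂ :=
  Matrix.of fun q r => A (q.1, r.2) (r.1, q.2)

/-- `A` is positive under partial transposition. -/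
def IsPPT {n p : Type*} [Fintype n] [Fintype p]
    (A : Matrix (n × p) (n × p) ℂ) : Prop :=
  A.PosSemidef ∧ (ptr A).PosSemidef

/-- Doubly stochastic positive map: `T(Id/√k) = Id/√m` and `T^*(Id/√m) = Id/√k`,
the latter expressed via the trace characterization of the adjoint. -/
def IsDoublyStochastic {n p : Type*} [Fintype n] [Fintype p] [DecidableEq n] [DecidableEq p]
    (T : Matrix n n ℂ → Matrix p p ℂ) : Prop :=
  IsPosMap T ∧
  T ((Real.sqrt (Fintype.card n) : ℂ)⁻¹ • 1) = (Real.sqrt (Fintype.card p) : ℂ)⁻¹ • 1 ∧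
  ∀ X : Matrix n n ℂ,
    (Real.sqrt (Fintype.card p) : ℂ)⁻¹ * (T X).trace
      = (Real.sqrt (Fintype.card n) : ℂ)⁻¹ * X.trace

/-- `T` is equivalent to a doubly stochastic map. -/
def EquivDS {n p : Type*} [Fintype n] [Fintype p] [DecidableEq n] [DecidableEq p]
    (T : Matrix n n ℂ → Matrix p p ℂ) : Prop :=
  ∃ (R : Matrix n n ℂ) (S : Matrix p p ℂ), IsUnit R ∧ IsUnit S ∧
    IsDoublyStochastic fun X => S * T (R * X * Rᴴ) * Sᴴ

/-- `W` is a solution of Problem 1 subjected to a map with adjoint `Tstar` and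
the orthogonal projection `V`. -/
def IsSolutionW {n : Type*} [Fintype n] [DecidableEq n]
    (Tstar : Matrix n n ℂ → Matrix n n ℂ) (V W : Matrix n n ℂ) : Prop :=
  IsOrthProj W ∧ LeavesInv Tstar W ∧ IsIrredOn Tstar W ∧
    W.rank = V.rank ∧
    LinearMap.ker W.mulVecLin ⊓ LinearMap.range V.mulVecLin = ⊥

/-- The property appearing in item 3 of the main theorem: for every invariant
irreducible corner `V` with spectral radius `l` there is a unique solution `W`
of Problem 1 with spectral radius `l`. -/
def UniqueWProp {n : Type*} [Fintype n] [DecidableEq n]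
    (T Tstar : Matrix n n ℂ → Matrix n n ℂ) : Prop :=
  ∀ (V : Matrix n n ℂ) (l : ℝ), IsOrthProj V → LeavesInv T V → IsIrredOn T V →
    HasSpecRadOn T V l →
    ∃! W : Matrix n n ℂ, IsOrthProj W ∧ LeavesInv Tstar W ∧ IsIrredOn Tstar W ∧
      HasSpecRadOn Tstar W l ∧ W.rank = V.rank ∧
      LinearMap.ker W.mulVecLin ⊓ LinearMap.range V.mulVecLin = ⊥

/-- `ℂ^n` is the (not necessarily orthogonal) direct sum of the images of the `V i`. -/
def IsDirectSumDecomp {n : Type*} [Fintype n] {s : ℕ}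
    (V : Fin s → Matrix n n ℂ) : Prop :=
  (⨆ i, LinearMap.range (V i).mulVecLin) = ⊤ ∧
    iSupIndep fun i => LinearMap.range (V i).mulVecLin



section AuxProp4

lemma psd_cancel' {n : Type*} [Fintype n] [DecidableEq n] {B P : Matrix n n ℂ}
    (hB : B.PosSemidef) (hP : Pᴴ = P) (h : P * B * P = 0) : B * P = 0 ∧ P * B = 0 := by
  obtain ⟨C, rfl⟩ : ∃ C : Matrix n n ℂ, B = Cᴴ * C := by
    open scoped MatrixOrder Matrix.Norms.L2Operator in
    obtain ⟨C, rfl⟩ := CStarAlgebra.nonneg_iff_eq_star_mul_self.mp hB.nonneg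
    exact ⟨C, rfl⟩
  have hCP : C * P = 0 := by
    rw [← Matrix.conjTranspose_mul_self_eq_zero (A := C * P), Matrix.conjTranspose_mul, hP]
    rw [show P * Cᴴ * (C * P) = P * (Cᴴ * C) * P by simp [mul_assoc], h]
  constructor
  · rw [mul_assoc, hCP, mul_zero]
  · have h2 : (Cᴴ * C * P)ᴴ = P * (Cᴴ * C) := by
      simp [Matrix.conjTranspose_mul, hP, mul_assoc]
    rw [← h2, mul_assoc, hCP, mul_zero, Matrix.conjTranspose_zero]

lemma ptr_push' {k : ℕ} (X Y Z V : Matrix (Fin k) (Fin k) ℂ)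
    (C : Matrix (Fin k × Fin k) (Fin k × Fin k) ℂ) :
    ptr ((X ⊗ₖ Y) * C * (Z ⊗ₖ V)) = (X ⊗ₖ Vᵀ) * ptr C * (Z ⊗ₖ Yᵀ) := by
  ext ⟨l, j⟩ ⟨i, j'⟩
  simp only [ptr, Matrix.of_apply, Matrix.mul_apply, Matrix.kroneckerMap_apply,
    Matrix.transpose_apply]
  simp only [Finset.sum_mul]
  rw [← Finset.sum_product', ← Finset.sum_product']
  refine Fintype.sum_equiv ⟨fun p => ((p.1.1, p.2.2), (p.2.1, p.1.2)),
    fun p => ((p.1.1, p.2.2), (p.2.1, p.1.2)), fun p => rfl, fun p => rfl⟩ _ _ fun p => ?_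
  obtain ⟨⟨a, b⟩, ⟨c, d⟩⟩ := p
  simp only [Equiv.coe_fn_mk]
  ring

lemma entry_lemma' {k : ℕ} (B : Matrix (Fin k × Fin k) (Fin k × Fin k) ℂ)
    (P Q R S : Matrix (Fin k) (Fin k) ℂ) (l₀ i₀ j j' : Fin k) :
    ((Pᵀ ⊗ₖ Q) * B * (Rᵀ ⊗ₖ S)) (l₀, j) (i₀, j') =
      (Q * (Gmap B (P * Matrix.single l₀ i₀ 1 * R)ᵀ) * S) j j' := by
  have hY : (P * Matrix.single l₀ i₀ 1 * R)ᵀ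
      = Matrix.of (fun i' l' => P l' l₀ * R i₀ i') := by
    ext a b
    simp [Matrix.mul_apply, Matrix.single, ite_and, mul_ite, ite_mul,
      Finset.sum_ite_eq, Finset.sum_ite_eq']
  rw [hY]
  simp only [Matrix.mul_apply, Gmap, Matrix.of_apply, Matrix.kroneckerMap_apply,
    Fintype.sum_prod_type, Matrix.transpose_apply, Finset.sum_mul, Finset.mul_sum]
  rw [Finset.sum_comm]
  refine Finset.sum_congr rfl fun b _ => ?_
  conv_lhs => enter [2, a]; rw [Finset.sum_comm]
  rw [Finset.sum_comm]
  refine Finset.sum_congr rfl fun d _ => ?_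
  refine Finset.sum_congr rfl fun a _ => ?_
  refine Finset.sum_congr rfl fun c _ => ?_
  ring

lemma kron_herm' {k : ℕ} {X Y : Matrix (Fin k) (Fin k) ℂ}
    (hX : Xᴴ = X) (hY : Yᴴ = Y) : (X ⊗ₖ Y)ᴴ = X ⊗ₖ Y := by
  ext ⟨a, b⟩ ⟨c, d⟩
  have h1 := congrFun (congrFun hX a) c
  have h2 := congrFun (congrFun hY b) d
  simp only [Matrix.conjTranspose_apply] at h1 h2
  simp only [Matrix.conjTranspose_apply, Matrix.kroneckerMap_apply, star_mul', h1, h2]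

lemma trans_herm' {k : ℕ} {X : Matrix (Fin k) (Fin k) ℂ} (hX : Xᴴ = X) : (Xᵀ)ᴴ = Xᵀ := by
  ext a b
  have h1 := congrFun (congrFun hX b) a
  simp only [Matrix.conjTranspose_apply] at h1 ⊢
  simp [Matrix.transpose_apply, h1]

lemma ptr_zero' {k : ℕ} : ptr (0 : Matrix (Fin k × Fin k) (Fin k × Fin k) ℂ) = 0 := by
  ext ⟨a, b⟩ ⟨c, d⟩; simp [ptr]

end AuxProp4

/-- Proposition 4 (complete reducibility of PPT states): if `B ∈ M_k ⊗ M_k` is PPT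
and `W₁,…,W_s` are pairwise orthogonal projections summing to the identity whose
corners are left invariant by `X ↦ G_B(Xᵗ)`, then
`B = Σᵢ (Wᵢᵗ ⊗ Wᵢ) B (Wᵢᵗ ⊗ Wᵢ)`. -/
theorem stmt0 {k : ℕ} (B : Matrix (Fin k × Fin k) (Fin k × Fin k) ℂ)
    (hPPT : IsPPT B) (s : ℕ) (W : Fin s → Matrix (Fin k) (Fin k) ℂ)
    (hproj : ∀ i, IsOrthProj (W i))
    (horth : ∀ i j, i ≠ j → W i * W j = 0)
    (hsum : ∑ i, W i = 1)
    (hinv : ∀ i, LeavesInv (fun X => Gmap B Xᵀ) (W i)) :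
    B = ∑ i, ((W i)ᵀ ⊗ₖ W i) * B * ((W i)ᵀ ⊗ₖ W i) := by
  classical
  obtain ⟨hB, hBt⟩ := hPPT
  set Q : Fin s → Fin s → Matrix (Fin k × Fin k) (Fin k × Fin k) ℂ :=
    fun a b => (W a)ᵀ ⊗ₖ W b with hQdef
  -- Step 1: corner invariance kills compressions Q a b * B * Q a d unless b = d = a
  have h1 : ∀ a b d : Fin s, (b ≠ a ∨ d ≠ a) → Q a b * B * Q a d = 0 := by
    intro a b d hbd
    ext ⟨l, j⟩ ⟨i, j'⟩
    rw [show (0 : Matrix (Fin k × Fin k) (Fin k × Fin k) ℂ) (l, j) (i, j') = 0 from rfl]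
    rw [entry_lemma' B (W a) (W b) (W a) (W d) l i j j']
    have hi := hinv a (Matrix.single l i 1)
    simp only at hi
    rw [hi]
    rcases hbd with hb | hd
    · rw [show W b * (W a * (Gmap B ((W a) * Matrix.single l i 1 * (W a))ᵀ) * W a) * W d
          = (W b * W a) * ((Gmap B ((W a) * Matrix.single l i 1 * (W a))ᵀ) * W a * W d)
          by simp [mul_assoc], horth b a hb, zero_mul]
      rfl
    · rw [show W b * (W a * (Gmap B ((W a) * Matrix.single l i 1 * (W a))ᵀ) * W a) * W d
          = (W b * (W a * (Gmap B ((W a) * Matrix.single l i 1 * (W a))ᵀ))) * (W a * W d)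
          by simp [mul_assoc], horth a d (Ne.symm hd), mul_zero]
      rfl
  have hWH : ∀ a, (W a)ᴴ = W a := fun a => (hproj a).1
  have hQH : ∀ a b, (Q a b)ᴴ = Q a b := fun a b =>
    kron_herm' (trans_herm' (hWH a)) (hWH b)
  -- Step 2: B * Q a b = 0 and Q a b * B = 0 for b ≠ a
  have h2 : ∀ a b : Fin s, b ≠ a → B * Q a b = 0 ∧ Q a b * B = 0 := fun a b hb =>
    psd_cancel' hB (hQH a b) (h1 a b b (Or.inl hb))
  -- the Q's sum to 1
  have hsumQ : ∑ a, ∑ b, Q a b = (1 : Matrix (Fin k × Fin k) (Fin k × Fin k) ℂ) := by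
    ext ⟨x1, x2⟩ ⟨y1, y2⟩
    have hs1 := congrFun (congrFun hsum x1) y1
    have hs2 := congrFun (congrFun hsum x2) y2
    simp only [Matrix.sum_apply] at hs1 hs2
    simp only [Matrix.sum_apply, hQdef, Matrix.kroneckerMap_apply, Matrix.transpose_apply]
    rw [show ∑ a, ∑ b, W a y1 x1 * W b x2 y2 = (∑ a, W a y1 x1) * (∑ b, W b x2 y2) by
      rw [Finset.sum_mul]; exact Finset.sum_congr rfl fun a _ => by rw [Finset.mul_sum]]
    have hs1' : ∑ a, W a y1 x1 = (1 : Matrix (Fin k) (Fin k) ℂ) y1 x1 := by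
      have := congrFun (congrFun hsum y1) x1
      simpa [Matrix.sum_apply] using this
    rw [hs1', hs2]
    rw [show (1 : Matrix (Fin k) (Fin k) ℂ) y1 x1 = (1 : Matrix (Fin k) (Fin k) ℂ) x1 y1 by
      simp [Matrix.one_apply, eq_comm]]
    simp only [Matrix.one_apply, Prod.ext_iff, ite_and]
    split_ifs <;> simp
  -- B is supported on the diagonal blocks
  have hBdiag : B = ∑ a, ∑ c, Q a a * B * Q c c := by
    have hright : B * (∑ a, ∑ b, Q a b) = ∑ a, B * Q a a := by
      rw [Finset.mul_sum]
      refine Finset.sum_congr rfl fun a _ => ?_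
      rw [Finset.mul_sum]
      rw [Finset.sum_eq_single a (fun b _ hb => (h2 a b hb).1) (by simp)]
    have hleft : (∑ a, ∑ b, Q a b) * B = ∑ a, Q a a * B := by
      rw [Finset.sum_mul]
      refine Finset.sum_congr rfl fun a _ => ?_
      rw [Finset.sum_mul]
      rw [Finset.sum_eq_single a (fun b _ hb => (h2 a b hb).2) (by simp)]
    calc B = (∑ a, ∑ b, Q a b) * B * (∑ a, ∑ b, Q a b) := by rw [hsumQ]; simp
    _ = (∑ a, Q a a * B) * (∑ a, ∑ b, Q a b) := by rw [hleft]
    _ = ∑ a, Q a a * (B * (∑ c, ∑ b, Q c b)) := by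
        rw [Finset.sum_mul]; exact Finset.sum_congr rfl fun a _ => by rw [mul_assoc]
    _ = ∑ a, ∑ c, Q a a * B * Q c c := by
        refine Finset.sum_congr rfl fun a _ => ?_
        rw [hright, Finset.mul_sum]
        exact Finset.sum_congr rfl fun c _ => by rw [mul_assoc]
  -- Step 3: PPT kills the off-diagonal double blocks
  have h3 : ∀ a c : Fin s, a ≠ c → Q a a * B * Q c c = 0 := by
    intro a c hac
    have hcomp : ((W a)ᵀ ⊗ₖ (W c)ᵀ) * ptr B * ((W a)ᵀ ⊗ₖ (W c)ᵀ) = 0 := by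
      rw [← ptr_push' (W a)ᵀ (W c) (W a)ᵀ (W c) B]
      rw [show ((W a)ᵀ ⊗ₖ W c) * B * ((W a)ᵀ ⊗ₖ W c) = Q a c * B * Q a c from rfl]
      rw [h1 a c c (Or.inl (Ne.symm hac)), ptr_zero']
    have hherm : ((W a)ᵀ ⊗ₖ (W c)ᵀ)ᴴ = (W a)ᵀ ⊗ₖ (W c)ᵀ :=
      kron_herm' (trans_herm' (hWH a)) (trans_herm' (hWH c))
    have hkill := (psd_cancel' hBt hherm hcomp).2
    have hptr : ptr (Q a a * B * Q c c)
        = ((W a)ᵀ ⊗ₖ (W c)ᵀ) * ptr B * ((W c)ᵀ ⊗ₖ (W a)ᵀ) :=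
      ptr_push' (W a)ᵀ (W a) (W c)ᵀ (W c) B
    have hz : ptr (Q a a * B * Q c c) = 0 := by
      rw [hptr, hkill, zero_mul]
    have := congrArg ptr hz
    rwa [show ptr (ptr (Q a a * B * Q c c)) = Q a a * B * Q c c from rfl, ptr_zero'] at this
  -- conclude
  conv_lhs => rw [hBdiag]
  refine Finset.sum_congr rfl fun a _ => ?_
  rw [Finset.sum_eq_single a (fun c _ hc => h3 a c (Ne.symm hc)) (by simp)]

end
end

section
/- Let B ∈ M_k(ℂ)⊗M_k(ℂ) be a PPT matrix and let W_1,…,W_s ∈ M_k(ℂ) be orthogonal projections such that W_iW_j = 0 for i ≠ j, Σ_{i=1}^s W_i = Id, and W_iM_kW_i is left invariant by the map X ↦ G_B(X^t) for every i. Then for all j ≠ m: B(W_j^t⊗W_m) = (W_j^t⊗W_m)B = 0 and B^{t₂}(W_j^t⊗W_m^t) = (W_j^t⊗W_m^t)B^{t₂} = 0, where B^{t₂} is the partial transpose of B. -/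
open scoped Kronecker ComplexOrder
open Matrix

noncomputable section

lemma kron_conjT {n p : Type*} [Fintype n] [Fintype p] (A : Matrix n n ℂ) (B : Matrix p p ℂ) :
    (A ⊗ₖ B)ᴴ = Aᴴ ⊗ₖ Bᴴ := by
  ext ⟨i, j⟩ ⟨l, m⟩
  simp [conjTranspose_apply, kroneckerMap_apply]

lemma tr_self_eq_zero {m n : Type*} [Fintype m] [Fintype n] (C : Matrix m n ℂ)
    (h : (Cᴴ * C).trace = 0) : C = 0 := by
  have h' : ∑ j, ∑ i, Complex.normSq (C i j) = 0 := by
    have := congrArg Complex.re h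
    simpa [Matrix.trace, Matrix.mul_apply, Matrix.conjTranspose_apply, Matrix.diag,
      ← Complex.normSq_eq_conj_mul_self, Complex.ofReal_sum] using this
  ext i j
  have h2 := (Finset.sum_eq_zero_iff_of_nonneg (fun j _ => Finset.sum_nonneg
    (fun i _ => Complex.normSq_nonneg (C i j)))).mp h' j (Finset.mem_univ j)
  have h3 := (Finset.sum_eq_zero_iff_of_nonneg (fun i _ => Complex.normSq_nonneg (C i j))).mp
    h2 i (Finset.mem_univ i)
  simpa using Complex.normSq_eq_zero.mp h3

lemma psd_proj {N : Type*} [Fintype N] [DecidableEq N] {B P : Matrix N N ℂ}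
    (hB : B.PosSemidef) (hP : P.IsHermitian) (hPP : P * P = P)
    (h : (B * P).trace = 0) : B * P = 0 ∧ P * B = 0 := by
  obtain ⟨C, hC⟩ : ∃ C : Matrix N N ℂ, B = Cᴴ * C := by
    open scoped MatrixOrder in
    exact ⟨CFC.sqrt B, by
      rw [show (CFC.sqrt B)ᴴ = CFC.sqrt B from (CFC.sqrt_nonneg B).isSelfAdjoint.star_eq,
        CFC.sqrt_mul_sqrt_self B hB.nonneg]⟩
  have key : C * P = 0 := by
    apply tr_self_eq_zero
    have e : (C * P)ᴴ * (C * P) = P * B * P := by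
      rw [conjTranspose_mul, hP.eq, hC]
      noncomm_ring
    rw [e, Matrix.trace_mul_cycle, hPP, Matrix.trace_mul_comm]; exact h
  have h1 : B * P = 0 := by
    rw [hC, Matrix.mul_assoc, key, Matrix.mul_zero]
  refine ⟨h1, ?_⟩
  have : (B * P)ᴴ = P * B := by rw [conjTranspose_mul, hP.eq, hB.1.eq]
  rw [← this, h1, conjTranspose_zero]

lemma tr_mul_kron {n p : Type*} [Fintype n] [Fintype p]
    (B : Matrix (n × p) (n × p) ℂ) (X : Matrix n n ℂ) (Y : Matrix p p ℂ) :
    (B * (X ⊗ₖ Y)).trace = (Gmap B X * Y).trace := by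
  simp only [Matrix.trace, Matrix.diag, Matrix.mul_apply, Gmap, Matrix.kroneckerMap_apply,
    Matrix.of_apply, Fintype.sum_prod_type, Finset.sum_mul, Finset.mul_sum]
  rw [Finset.sum_comm]
  refine Finset.sum_congr rfl fun j _ => ?_
  conv_lhs => enter [2, i]; rw [Finset.sum_comm]
  rw [Finset.sum_comm]
  refine Finset.sum_congr rfl fun j' _ => ?_
  rw [Finset.sum_comm]
  refine Finset.sum_congr rfl fun i _ => Finset.sum_congr rfl fun l _ => ?_
  ring

lemma tr_ptr_kron {n p : Type*} [Fintype n] [Fintype p]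
    (B : Matrix (n × p) (n × p) ℂ) (X : Matrix n n ℂ) (Y : Matrix p p ℂ) :
    (ptr B * (X ⊗ₖ Y)).trace = (B * (X ⊗ₖ Yᵀ)).trace := by
  simp only [Matrix.trace, Matrix.diag, Matrix.mul_apply, ptr, Matrix.kroneckerMap_apply,
    Matrix.of_apply, Matrix.transpose_apply, Fintype.sum_prod_type]
  refine Finset.sum_congr rfl fun i _ => ?_
  conv_lhs => enter [2, j]; rw [Finset.sum_comm]
  rw [Finset.sum_comm]
  refine Finset.sum_congr rfl fun j _ => ?_
  rw [Finset.sum_comm]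

/-- Equations (3) and (4) in the proof of Proposition 4: under the hypotheses of
the complete reducibility property, the off-diagonal compressions of `B` and of
its partial transpose vanish. -/
theorem stmt1 {k : ℕ} (B : Matrix (Fin k × Fin k) (Fin k × Fin k) ℂ)
    (hPPT : IsPPT B) (s : ℕ) (W : Fin s → Matrix (Fin k) (Fin k) ℂ)
    (hproj : ∀ i, IsOrthProj (W i))
    (horth : ∀ i j, i ≠ j → W i * W j = 0)
    (hsum : ∑ i, W i = 1)
    (hinv : ∀ i, LeavesInv (fun X => Gmap B Xᵀ) (W i)) :
    ∀ j m : Fin s, j ≠ m →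
      B * ((W j)ᵀ ⊗ₖ W m) = 0 ∧ ((W j)ᵀ ⊗ₖ W m) * B = 0 ∧
      ptr B * ((W j)ᵀ ⊗ₖ (W m)ᵀ) = 0 ∧ ((W j)ᵀ ⊗ₖ (W m)ᵀ) * ptr B = 0 := by
  intro j m hjm
  have hWjT_herm : ((W j)ᵀ)ᴴ = (W j)ᵀ := by
    show ((W j)ᴴ)ᵀ = (W j)ᵀ
    rw [(hproj j).1.eq]
  have hWjT_idem : (W j)ᵀ * (W j)ᵀ = (W j)ᵀ := by
    rw [← Matrix.transpose_mul, (hproj j).2]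
  have hWmT_herm : ((W m)ᵀ)ᴴ = (W m)ᵀ := by
    show ((W m)ᴴ)ᵀ = (W m)ᵀ
    rw [(hproj m).1.eq]
  have hWmT_idem : (W m)ᵀ * (W m)ᵀ = (W m)ᵀ := by
    rw [← Matrix.transpose_mul, (hproj m).2]
  have hGW : Gmap B (W j)ᵀ = W j * Gmap B (W j)ᵀ * W j := by
    have := hinv j 1
    rwa [Matrix.mul_one, (hproj j).2] at this
  have htr : (B * ((W j)ᵀ ⊗ₖ W m)).trace = 0 := by
    rw [tr_mul_kron, hGW, Matrix.mul_assoc, Matrix.mul_assoc, horth j m hjm,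
      Matrix.mul_zero, Matrix.mul_zero, Matrix.trace_zero]
  have hPherm : ((W j)ᵀ ⊗ₖ W m).IsHermitian := by
    show ((W j)ᵀ ⊗ₖ W m)ᴴ = _
    rw [kron_conjT, hWjT_herm, (hproj m).1.eq]
  have hPidem : ((W j)ᵀ ⊗ₖ W m) * ((W j)ᵀ ⊗ₖ W m) = (W j)ᵀ ⊗ₖ W m := by
    rw [← Matrix.mul_kronecker_mul, hWjT_idem, (hproj m).2]
  obtain ⟨e1, e2⟩ := psd_proj hPPT.1 hPherm hPidem htr
  have htr2 : (ptr B * ((W j)ᵀ ⊗ₖ (W m)ᵀ)).trace = 0 := by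
    rw [tr_ptr_kron, Matrix.transpose_transpose, htr]
  have hQherm : ((W j)ᵀ ⊗ₖ (W m)ᵀ).IsHermitian := by
    show ((W j)ᵀ ⊗ₖ (W m)ᵀ)ᴴ = _
    rw [kron_conjT, hWjT_herm, hWmT_herm]
  have hQidem : ((W j)ᵀ ⊗ₖ (W m)ᵀ) * ((W j)ᵀ ⊗ₖ (W m)ᵀ) = (W j)ᵀ ⊗ₖ (W m)ᵀ := by
    rw [← Matrix.mul_kronecker_mul, hWjT_idem, hWmT_idem]
  obtain ⟨e3, e4⟩ := psd_proj hPPT.2 hQherm hQidem htr2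
  exact ⟨e1, e2, e3, e4⟩


end
end

section
/- Let T : M_k(ℂ) → M_k(ℂ) be a positive map and Q ∈ M_k(ℂ) an invertible matrix. Assume T has the following property: for every orthogonal projection V ∈ M_k(ℂ) such that T(VM_kV) ⊆ VM_kV and T|_{VM_kV} is irreducible with spectral radius λ, there is a unique orthogonal projection W ∈ M_k(ℂ) such that T*(WM_kW) ⊆ WM_kW, T*|_{WM_kW} is irreducible with spectral radius λ, rank(W) = rank(V), and ker(W) ∩ Im(V) = {0}. Then the same property holds for the map S : M_k(ℂ) → M_k(ℂ) defined by S(X) = Q T(Q⁻¹ X (Q⁻¹)*) Q*. -/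
open scoped Kronecker ComplexOrder
open Matrix

noncomputable section

namespace Stmt3Aux

open Matrix Submodule

variable {k : ℕ}

/-- The conjugation of a map by an invertible matrix. -/
def conj (Q : Matrix (Fin k) (Fin k) ℂ) (T : Matrix (Fin k) (Fin k) ℂ → Matrix (Fin k) (Fin k) ℂ) : Matrix (Fin k) (Fin k) ℂ → Matrix (Fin k) (Fin k) ℂ := fun X => Q * T (Q⁻¹ * X * (Q⁻¹)ᴴ) * Qᴴ

section UnitFacts

variable {Q : Matrix (Fin k) (Fin k) ℂ} (hQ : IsUnit Q)

lemma mul_inv (hQ : IsUnit Q) : Q * Q⁻¹ = 1 :=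
  Matrix.mul_nonsing_inv _ ((Matrix.isUnit_iff_isUnit_det _).1 hQ)

lemma inv_mul (hQ : IsUnit Q) : Q⁻¹ * Q = 1 :=
  Matrix.nonsing_inv_mul _ ((Matrix.isUnit_iff_isUnit_det _).1 hQ)

lemma unit_inv (hQ : IsUnit Q) : IsUnit Q⁻¹ :=
  ⟨⟨Q⁻¹, Q, inv_mul hQ, mul_inv hQ⟩, rfl⟩

lemma inv_inv_eq (hQ : IsUnit Q) : Q⁻¹⁻¹ = Q :=
  Matrix.nonsing_inv_nonsing_inv _ ((Matrix.isUnit_iff_isUnit_det _).1 hQ)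

lemma unit_ct (hQ : IsUnit Q) : IsUnit Qᴴ := (Matrix.isUnit_conjTranspose Q).2 hQ

lemma sandwich_cancel (hQ : IsUnit Q) (X : Matrix (Fin k) (Fin k) ℂ) : Q * (Q⁻¹ * X * (Q⁻¹)ᴴ) * Qᴴ = X := by
  have h1 : (Q⁻¹)ᴴ * Qᴴ = 1 := by rw [← conjTranspose_mul, mul_inv hQ, conjTranspose_one]
  calc Q * (Q⁻¹ * X * (Q⁻¹)ᴴ) * Qᴴ = (Q * Q⁻¹) * X * ((Q⁻¹)ᴴ * Qᴴ) := by
        simp only [Matrix.mul_assoc]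
    _ = X := by rw [mul_inv hQ, h1, Matrix.one_mul, Matrix.mul_one]

lemma sandwich_cancel' (hQ : IsUnit Q) (X : Matrix (Fin k) (Fin k) ℂ) : Q⁻¹ * (Q * X * Qᴴ) * (Q⁻¹)ᴴ = X := by
  have h1 : Qᴴ * (Q⁻¹)ᴴ = 1 := by rw [← conjTranspose_mul, inv_mul hQ, conjTranspose_one]
  calc Q⁻¹ * (Q * X * Qᴴ) * (Q⁻¹)ᴴ = (Q⁻¹ * Q) * X * (Qᴴ * (Q⁻¹)ᴴ) := by
        simp only [Matrix.mul_assoc]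
    _ = X := by rw [inv_mul hQ, h1, Matrix.one_mul, Matrix.mul_one]

lemma conj_conj (hQ : IsUnit Q) (T : Matrix (Fin k) (Fin k) ℂ → Matrix (Fin k) (Fin k) ℂ) : conj Q⁻¹ (conj Q T) = T := by
  funext X
  simp only [conj, inv_inv_eq hQ]
  rw [sandwich_cancel' hQ, sandwich_cancel' hQ]

lemma map_map_inv (hQ : IsUnit Q) (U : Submodule ℂ (Fin k → ℂ)) :
    Submodule.map (Q⁻¹).mulVecLin (Submodule.map Q.mulVecLin U) = U := by
  rw [← Submodule.map_comp, ← Matrix.mulVecLin_mul, inv_mul hQ, Matrix.mulVecLin_one,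
    Submodule.map_id]

lemma map_inv_map (hQ : IsUnit Q) (U : Submodule ℂ (Fin k → ℂ)) :
    Submodule.map Q.mulVecLin (Submodule.map (Q⁻¹).mulVecLin U) = U := by
  rw [← Submodule.map_comp, ← Matrix.mulVecLin_mul, mul_inv hQ, Matrix.mulVecLin_one,
    Submodule.map_id]

lemma mulVecLin_inj (hQ : IsUnit Q) : Function.Injective Q.mulVecLin := by
  intro x y h
  have := congrArg (Q⁻¹).mulVecLin h
  simpa only [Matrix.mulVecLin_apply, Matrix.mulVec_mulVec, inv_mul hQ,
    Matrix.one_mulVec] using this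

lemma range_unit_mulVecLin (hQ : IsUnit Q) : LinearMap.range (Matrix.mulVecLin Q) = ⊤ := by
  rw [LinearMap.range_eq_top]
  intro x
  exact ⟨Q⁻¹ *ᵥ x, by simp [Matrix.mulVecLin_apply, Matrix.mulVec_mulVec, mul_inv hQ]⟩

lemma range_mul (A B : Matrix (Fin k) (Fin k) ℂ) : LinearMap.range (Matrix.mulVecLin (A * B)) = Submodule.map A.mulVecLin (LinearMap.range (Matrix.mulVecLin B)) := by
  rw [Matrix.mulVecLin_mul, LinearMap.range_comp]

lemma range_mul_unit (A : Matrix (Fin k) (Fin k) ℂ) (hQ : IsUnit Q) : LinearMap.range (Matrix.mulVecLin (A * Q)) = LinearMap.range (Matrix.mulVecLin A) := by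
  rw [Matrix.mulVecLin_mul, LinearMap.range_comp, range_unit_mulVecLin hQ, Submodule.map_top]

end UnitFacts

section OrthProj

variable {V P X : Matrix (Fin k) (Fin k) ℂ}

lemma mat_ext {A B : Matrix (Fin k) (Fin k) ℂ} (h : ∀ x, A *ᵥ x = B *ᵥ x) : A = B := by
  exact Matrix.toLin'.injective
    (LinearMap.ext fun x => by simpa only [Matrix.toLin'_apply] using h x)

lemma orthProj_mulVec_mem (hV : IsOrthProj V) {x : Fin k → ℂ}
    (hx : x ∈ LinearMap.range (Matrix.mulVecLin V)) : V *ᵥ x = x := by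
  obtain ⟨y, rfl⟩ := hx
  simp only [Matrix.mulVecLin_apply, Matrix.mulVec_mulVec, hV.2]

lemma mul_eq_self_iff_range (hV : IsOrthProj V) (X : Matrix (Fin k) (Fin k) ℂ) :
    V * X = X ↔ LinearMap.range (Matrix.mulVecLin X) ≤ LinearMap.range (Matrix.mulVecLin V) := by
  constructor
  · intro h z hz
    obtain ⟨y, rfl⟩ := hz
    exact ⟨X *ᵥ y, by rw [Matrix.mulVecLin_apply, Matrix.mulVecLin_apply,
      Matrix.mulVec_mulVec, h]⟩
  · intro h
    apply mat_ext
    intro x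
    rw [← Matrix.mulVec_mulVec]
    exact orthProj_mulVec_mem hV (h ⟨x, rfl⟩)

lemma corner_iff_range (hV : IsOrthProj V) (X : Matrix (Fin k) (Fin k) ℂ) :
    V * X * V = X ↔ (LinearMap.range (Matrix.mulVecLin X) ≤ LinearMap.range (Matrix.mulVecLin V)) ∧ LinearMap.range (Matrix.mulVecLin Xᴴ) ≤ LinearMap.range (Matrix.mulVecLin V) := by
  constructor
  · intro h
    have h1 : V * X = X := by
      nth_rewrite 2 [← h]
      nth_rewrite 1 [← h]
      simp only [← Matrix.mul_assoc, hV.2]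
    have h2 : X * V = X := by
      nth_rewrite 2 [← h]
      nth_rewrite 1 [← h]
      simp only [Matrix.mul_assoc, hV.2]
    constructor
    · exact (mul_eq_self_iff_range hV X).1 h1
    · refine (mul_eq_self_iff_range hV Xᴴ).1 ?_
      have := congrArg conjTranspose h2
      rwa [conjTranspose_mul, hV.1.eq] at this
  · rintro ⟨h1, h2⟩
    have hVX : V * X = X := (mul_eq_self_iff_range hV X).2 h1
    have hVXH : V * Xᴴ = Xᴴ := (mul_eq_self_iff_range hV Xᴴ).2 h2
    have hXV : X * V = X := by
      have := congrArg conjTranspose hVXH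
      rwa [conjTranspose_mul, conjTranspose_conjTranspose, hV.1.eq] at this
    rw [hVX, hXV]

lemma orthProj_ext (hP : IsOrthProj P) (hV : IsOrthProj V)
    (h : LinearMap.range (Matrix.mulVecLin P) = LinearMap.range (Matrix.mulVecLin V)) : P = V := by
  have h1 : V * P = P := (mul_eq_self_iff_range hV P).2 (le_of_eq h)
  have h2 : P * V = V := (mul_eq_self_iff_range hP V).2 (le_of_eq h.symm)
  have h3 : P * V = P := by
    have := congrArg conjTranspose h1
    rwa [conjTranspose_mul, hP.1.eq, hV.1.eq] at this
  rw [← h3, h2]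

lemma isOrthProj_zero : IsOrthProj (0 : Matrix (Fin k) (Fin k) ℂ) :=
  ⟨Matrix.isHermitian_zero, by rw [Matrix.mul_zero]⟩

lemma orthProj_eq_zero (hP : IsOrthProj P) (h : LinearMap.range (Matrix.mulVecLin P) = ⊥) : P = 0 := by
  refine orthProj_ext hP isOrthProj_zero ?_
  rw [h, Matrix.mulVecLin_zero, LinearMap.range_zero]

lemma orthProj_mulVec_eq_zero_iff (hP : IsOrthProj P) {x : Fin k → ℂ} :
    P *ᵥ x = 0 ↔ ∀ y, star (P *ᵥ y) ⬝ᵥ x = 0 := by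
  have key : ∀ y z, star (P *ᵥ y) ⬝ᵥ z = star y ⬝ᵥ (P *ᵥ z) := by
    intro y z
    rw [star_mulVec, hP.1.eq, ← dotProduct_mulVec]
  constructor
  · intro h y
    rw [key, h, dotProduct_zero]
  · intro h
    have h0 : star (P *ᵥ x) ⬝ᵥ (P *ᵥ x) = 0 := by
      rw [key, Matrix.mulVec_mulVec, hP.2, ← key, h]
    exact dotProduct_star_self_eq_zero.1 h0

end OrthProj

end Stmt3Aux

namespace Stmt3Aux

section ProjMat

open Matrix Submodule

variable {k : ℕ}

/-- The submodule of `EuclideanSpace` corresponding to a submodule of `Fin k → ℂ`. -/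
def esub (U : Submodule ℂ (Fin k → ℂ)) : Submodule ℂ (EuclideanSpace ℂ (Fin k)) :=
  Submodule.comap (WithLp.linearEquiv 2 ℂ (Fin k → ℂ) : EuclideanSpace ℂ (Fin k) →ₗ[ℂ] (Fin k → ℂ)) U

/-- The orthogonal projection matrix onto a subspace of `Fin k → ℂ`. -/
def projMat (U : Submodule ℂ (Fin k → ℂ)) : Matrix (Fin k) (Fin k) ℂ :=
  Matrix.toEuclideanLin.symm
    (((esub U).subtypeL.comp (orthogonalProjection (esub U))).toLinearMap)

lemma projMat_toEuclideanLin (U : Submodule ℂ (Fin k → ℂ)) :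
    Matrix.toEuclideanLin (projMat U)
      = ((esub U).subtypeL.comp (orthogonalProjection (esub U))).toLinearMap :=
  LinearEquiv.apply_symm_apply _ _

lemma projMat_mulVec (U : Submodule ℂ (Fin k → ℂ)) (x : Fin k → ℂ) :
    projMat U *ᵥ x = (WithLp.equiv 2 (Fin k → ℂ))
      ((orthogonalProjection (esub U) ((WithLp.equiv 2 (Fin k → ℂ)).symm x) :
        EuclideanSpace ℂ (Fin k))) := by
  have h := congrFun (congrArg DFunLike.coe (projMat_toEuclideanLin U))
    ((WithLp.equiv 2 (Fin k → ℂ)).symm x)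
  rw [show Matrix.toEuclideanLin (projMat U) ((WithLp.equiv 2 (Fin k → ℂ)).symm x) = (WithLp.equiv 2 (Fin k → ℂ)).symm (projMat U *ᵥ x) from rfl] at h
  have := congrArg (WithLp.equiv 2 (Fin k → ℂ)) h
  simpa using this

lemma projMat_isOrthProj (U : Submodule ℂ (Fin k → ℂ)) : IsOrthProj (projMat U) := by
  constructor
  · rw [Matrix.isHermitian_iff_isSymmetric, projMat_toEuclideanLin]
    exact Submodule.starProjection_isSymmetric (esub U)
  · apply mat_ext
    intro x
    rw [← Matrix.mulVec_mulVec, projMat_mulVec, projMat_mulVec,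
      Equiv.symm_apply_apply, orthogonalProjection_mem_subspace_eq_self]

lemma projMat_range (U : Submodule ℂ (Fin k → ℂ)) :
    LinearMap.range (projMat U).mulVecLin = U := by
  ext x
  simp only [LinearMap.mem_range, Matrix.mulVecLin_apply]
  constructor
  · rintro ⟨y, rfl⟩
    rw [projMat_mulVec]
    exact SetLike.coe_mem (orthogonalProjection (esub U) ((WithLp.equiv 2 (Fin k → ℂ)).symm y))
  · intro hx
    refine ⟨x, ?_⟩
    rw [projMat_mulVec]
    have hm : (WithLp.equiv 2 (Fin k → ℂ)).symm x ∈ esub U := by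
      simpa [esub, Submodule.mem_comap] using hx
    rw [show ((orthogonalProjection (esub U) ((WithLp.equiv 2 (Fin k → ℂ)).symm x) : EuclideanSpace ℂ (Fin k))) = (WithLp.equiv 2 (Fin k → ℂ)).symm x from (Submodule.starProjection_eq_self_iff (K := esub U)).2 hm]
    simp

end ProjMat

end Stmt3Aux

namespace Stmt3Aux

open Matrix Submodule

variable {k : ℕ} {Q : Matrix (Fin k) (Fin k) ℂ}

lemma star_ct_mulVec (B : Matrix (Fin k) (Fin k) ℂ) (w x : Fin k → ℂ) :
    star (Bᴴ *ᵥ w) ⬝ᵥ x = star w ⬝ᵥ (B *ᵥ x) := by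
  rw [star_mulVec, conjTranspose_conjTranspose, ← dotProduct_mulVec]

lemma ker_transform {A P P' : Matrix (Fin k) (Fin k) ℂ} (hA : IsUnit A)
    (hP : IsOrthProj P) (hP' : IsOrthProj P')
    (hrange : LinearMap.range P'.mulVecLin
      = Submodule.map ((A⁻¹)ᴴ).mulVecLin (LinearMap.range P.mulVecLin)) :
    LinearMap.ker P'.mulVecLin = Submodule.map A.mulVecLin (LinearMap.ker P.mulVecLin) := by
  ext x
  simp only [LinearMap.mem_ker, Matrix.mulVecLin_apply, Submodule.mem_map]
  constructor
  · intro hx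
    refine ⟨A⁻¹ *ᵥ x, ?_, by rw [Matrix.mulVec_mulVec, mul_inv hA, Matrix.one_mulVec]⟩
    rw [orthProj_mulVec_eq_zero_iff hP]
    intro y
    have hmem : (A⁻¹)ᴴ *ᵥ (P *ᵥ y) ∈ LinearMap.range P'.mulVecLin := by
      rw [hrange]
      exact ⟨P *ᵥ y, ⟨y, rfl⟩, rfl⟩
    obtain ⟨z, hz⟩ := hmem
    have h0 := (orthProj_mulVec_eq_zero_iff hP').1 hx z
    rw [Matrix.mulVecLin_apply] at hz
    rw [hz, star_ct_mulVec] at h0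
    exact h0
  · rintro ⟨w, hw, rfl⟩
    rw [orthProj_mulVec_eq_zero_iff hP']
    intro y
    have hmem : P' *ᵥ y ∈ LinearMap.range P'.mulVecLin := ⟨y, rfl⟩
    rw [hrange] at hmem
    obtain ⟨-, ⟨u, rfl⟩, hu⟩ := hmem
    rw [← hu, Matrix.mulVecLin_apply, Matrix.mulVecLin_apply, star_ct_mulVec,
      Matrix.mulVec_mulVec, inv_mul hA, Matrix.one_mulVec]
    exact (orthProj_mulVec_eq_zero_iff hP).1 hw u

lemma corner_transfer (hQ : IsUnit Q) {V V₁ : Matrix (Fin k) (Fin k) ℂ}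
    (hV : IsOrthProj V) (hV₁ : IsOrthProj V₁)
    (hr : LinearMap.range V₁.mulVecLin
      = Submodule.map (Q⁻¹).mulVecLin (LinearMap.range V.mulVecLin))
    (X : Matrix (Fin k) (Fin k) ℂ) :
    V * X * V = X ↔ V₁ * (Q⁻¹ * X * (Q⁻¹)ᴴ) * V₁ = Q⁻¹ * X * (Q⁻¹)ᴴ := by
  have hY : LinearMap.range (Q⁻¹ * X * (Q⁻¹)ᴴ).mulVecLin
      = Submodule.map (Q⁻¹).mulVecLin (LinearMap.range X.mulVecLin) := by
    rw [Matrix.mul_assoc, range_mul, range_mul_unit X (unit_ct (unit_inv hQ))]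
  have hYH : (Q⁻¹ * X * (Q⁻¹)ᴴ)ᴴ = Q⁻¹ * Xᴴ * (Q⁻¹)ᴴ := by
    simp only [conjTranspose_mul, conjTranspose_conjTranspose, Matrix.mul_assoc]
  have hYH' : LinearMap.range ((Q⁻¹ * X * (Q⁻¹)ᴴ)ᴴ).mulVecLin
      = Submodule.map (Q⁻¹).mulVecLin (LinearMap.range Xᴴ.mulVecLin) := by
    rw [hYH, Matrix.mul_assoc, range_mul, range_mul_unit Xᴴ (unit_ct (unit_inv hQ))]
  rw [corner_iff_range hV, corner_iff_range hV₁, hr, hY, hYH']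
  rw [Submodule.map_le_map_iff_of_injective (mulVecLin_inj (unit_inv hQ)),
    Submodule.map_le_map_iff_of_injective (mulVecLin_inj (unit_inv hQ))]

lemma corner_corner {V : Matrix (Fin k) (Fin k) ℂ} (hV : IsOrthProj V)
    (Z : Matrix (Fin k) (Fin k) ℂ) : V * (V * Z * V) * V = V * Z * V := by
  have h1 : V * (V * Z * V) = V * Z * V := by
    rw [← Matrix.mul_assoc, ← Matrix.mul_assoc, hV.2]
  have h2 : V * Z * V * V = V * Z * V := by
    rw [Matrix.mul_assoc (V * Z), hV.2]
  rw [h1, h2]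

lemma leavesInv_transfer (hQ : IsUnit Q) {V V₁ : Matrix (Fin k) (Fin k) ℂ}
    (hV : IsOrthProj V) (hV₁ : IsOrthProj V₁)
    (hr : LinearMap.range V₁.mulVecLin
      = Submodule.map (Q⁻¹).mulVecLin (LinearMap.range V.mulVecLin))
    (T : Matrix (Fin k) (Fin k) ℂ → Matrix (Fin k) (Fin k) ℂ)
    (h : LeavesInv (conj Q T) V) : LeavesInv T V₁ := by
  have key : ∀ Y, V₁ * Y * V₁ = Y → V₁ * T Y * V₁ = T Y := by
    intro Y hYc
    have hYX : Q⁻¹ * (Q * Y * Qᴴ) * (Q⁻¹)ᴴ = Y := sandwich_cancel' hQ Y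
    have hXc : V * (Q * Y * Qᴴ) * V = Q * Y * Qᴴ :=
      (corner_transfer hQ hV hV₁ hr _).2 (by rw [hYX]; exact hYc)
    have h2 := h (Q * Y * Qᴴ)
    rw [hXc] at h2
    have h3 := (corner_transfer hQ hV hV₁ hr (conj Q T (Q * Y * Qᴴ))).1 h2.symm
    have hSX : conj Q T (Q * Y * Qᴴ) = Q * T Y * Qᴴ := by
      show Q * T (Q⁻¹ * (Q * Y * Qᴴ) * (Q⁻¹)ᴴ) * Qᴴ = Q * T Y * Qᴴ
      rw [hYX]
    rw [hSX, sandwich_cancel' hQ] at h3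
    exact h3
  intro Z
  exact (key (V₁ * Z * V₁) (corner_corner hV₁ Z)).symm

lemma specRad_transfer (hQ : IsUnit Q) {V V₁ : Matrix (Fin k) (Fin k) ℂ}
    (hV : IsOrthProj V) (hV₁ : IsOrthProj V₁)
    (hr : LinearMap.range V₁.mulVecLin
      = Submodule.map (Q⁻¹).mulVecLin (LinearMap.range V.mulVecLin))
    (T : Matrix (Fin k) (Fin k) ℂ → Matrix (Fin k) (Fin k) ℂ) (l : ℝ)
    (h : HasSpecRadOn (conj Q T) V l) : HasSpecRadOn T V₁ l := by
  obtain ⟨⟨μ, X, hX0, hXc, hTX, habs⟩, hbound⟩ := h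
  constructor
  · refine ⟨μ, Q⁻¹ * X * (Q⁻¹)ᴴ, ?_, ?_, ?_, habs⟩
    · intro h0
      apply hX0
      have := congrArg (fun Z => Q * Z * Qᴴ) h0
      simpa only [sandwich_cancel hQ X, Matrix.mul_zero, Matrix.zero_mul] using this
    · exact (corner_transfer hQ hV hV₁ hr X).1 hXc
    · have h1 : Q⁻¹ * (conj Q T X) * (Q⁻¹)ᴴ = Q⁻¹ * (μ • X) * (Q⁻¹)ᴴ := by rw [hTX]
      have h2 : conj Q T X = Q * T (Q⁻¹ * X * (Q⁻¹)ᴴ) * Qᴴ := rfl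
      rw [h2, sandwich_cancel' hQ] at h1
      rw [h1, Matrix.mul_smul, Matrix.smul_mul]
  · intro μ Y hY0 hYc hTY
    refine hbound μ (Q * Y * Qᴴ) ?_ ?_ ?_
    · intro h0
      apply hY0
      have := congrArg (fun Z => Q⁻¹ * Z * (Q⁻¹)ᴴ) h0
      simpa only [sandwich_cancel' hQ Y, Matrix.mul_zero, Matrix.zero_mul] using this
    · exact (corner_transfer hQ hV hV₁ hr _).2 (by rw [sandwich_cancel' hQ]; exact hYc)
    · show Q * T (Q⁻¹ * (Q * Y * Qᴴ) * (Q⁻¹)ᴴ) * Qᴴ = μ • (Q * Y * Qᴴ)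
      rw [sandwich_cancel' hQ, hTY, Matrix.mul_smul, Matrix.smul_mul]

lemma irred_transfer (hQ : IsUnit Q) {V V₁ : Matrix (Fin k) (Fin k) ℂ}
    (hV : IsOrthProj V) (hV₁ : IsOrthProj V₁)
    (hr : LinearMap.range V₁.mulVecLin
      = Submodule.map (Q⁻¹).mulVecLin (LinearMap.range V.mulVecLin))
    (T : Matrix (Fin k) (Fin k) ℂ → Matrix (Fin k) (Fin k) ℂ)
    (hirr : IsIrredOn (conj Q T) V) : IsIrredOn T V₁ := by
  intro P' hP' hle hLI
  set V' := projMat (Submodule.map Q.mulVecLin (LinearMap.range P'.mulVecLin)) with hV'def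
  have hV'p : IsOrthProj V' := projMat_isOrthProj _
  have hrgV' : LinearMap.range V'.mulVecLin
      = Submodule.map Q.mulVecLin (LinearMap.range P'.mulVecLin) := projMat_range _
  have hle' : LinearMap.range V'.mulVecLin ≤ LinearMap.range V.mulVecLin := by
    rw [hrgV']
    calc Submodule.map Q.mulVecLin (LinearMap.range P'.mulVecLin)
        ≤ Submodule.map Q.mulVecLin (LinearMap.range V₁.mulVecLin) := Submodule.map_mono hle
      _ = LinearMap.range V.mulVecLin := by rw [hr, map_inv_map hQ]
  have hLIQ : LeavesInv (conj Q⁻¹ (conj Q T)) P' := by rw [conj_conj hQ]; exact hLI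
  have hLIV' : LeavesInv (conj Q T) V' :=
    leavesInv_transfer (unit_inv hQ) hP' hV'p
      (by rw [inv_inv_eq hQ, hrgV']) (conj Q T) hLIQ
  rcases hirr V' hV'p hle' hLIV' with h | h
  · left
    apply orthProj_ext hP' hV₁
    have hmap : Submodule.map Q.mulVecLin (LinearMap.range P'.mulVecLin)
        = LinearMap.range V.mulVecLin := by rw [← hrgV', h]
    rw [hr, ← hmap, map_map_inv hQ]
  · right
    apply orthProj_eq_zero hP'
    have hmap : Submodule.map Q.mulVecLin (LinearMap.range P'.mulVecLin) = ⊥ := by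
      rw [← hrgV', h, Matrix.mulVecLin_zero, LinearMap.range_zero]
    have h2 := congrArg (Submodule.map (Q⁻¹).mulVecLin) hmap
    rwa [map_map_inv hQ, Submodule.map_bot] at h2

end Stmt3Aux

namespace Stmt3Aux

open Matrix Submodule

variable {k : ℕ}

lemma rank_def (A : Matrix (Fin k) (Fin k) ℂ) :
    A.rank = Module.finrank ℂ (LinearMap.range A.mulVecLin) := rfl

lemma finrank_map_unit {A : Matrix (Fin k) (Fin k) ℂ} (hA : IsUnit A)
    (U : Submodule ℂ (Fin k → ℂ)) :
    Module.finrank ℂ (Submodule.map A.mulVecLin U) = Module.finrank ℂ U := by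
  let e : (Fin k → ℂ) ≃ₗ[ℂ] (Fin k → ℂ) :=
    LinearEquiv.ofLinear A.mulVecLin (A⁻¹).mulVecLin
      (by rw [← Matrix.mulVecLin_mul, mul_inv hA, Matrix.mulVecLin_one])
      (by rw [← Matrix.mulVecLin_mul, inv_mul hA, Matrix.mulVecLin_one])
  exact LinearEquiv.finrank_map_eq e U

lemma eq_of_forall_trace {N M : Matrix (Fin k) (Fin k) ℂ}
    (h : ∀ X : Matrix (Fin k) (Fin k) ℂ, (X * Nᴴ).trace = (X * Mᴴ).trace) : N = M := by
  have h0 : ∀ X : Matrix (Fin k) (Fin k) ℂ, (X * (N - M)ᴴ).trace = 0 := by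
    intro X
    rw [conjTranspose_sub, Matrix.mul_sub, Matrix.trace_sub, h, sub_self]
  have h1 := h0 (N - M)
  set D := N - M with hD
  have ht : (D * Dᴴ).trace = ∑ i, ∑ j, (Complex.normSq (D i j) : ℂ) := by
    simp [Matrix.trace, Matrix.diag, Matrix.mul_apply, Matrix.conjTranspose_apply,
      Complex.star_def, Complex.mul_conj]
  rw [ht] at h1
  have h2 : (∑ i, ∑ j, Complex.normSq (D i j)) = 0 := by exact_mod_cast h1
  have hzero : D = 0 := by
    ext i j
    have h3 := (Finset.sum_eq_zero_iff_of_nonneg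
      (fun i _ => Finset.sum_nonneg (fun j _ => Complex.normSq_nonneg _))).1 h2
    have h4 := (Finset.sum_eq_zero_iff_of_nonneg
      (fun j _ => Complex.normSq_nonneg _)).1 (h3 i (Finset.mem_univ i))
    simpa using Complex.normSq_eq_zero.1 (h4 j (Finset.mem_univ j))
  exact sub_eq_zero.1 hzero

end Stmt3Aux


/-- Lemma 6: the unique-`W` property (item 3 of the main theorem) is preserved
under the equivalence `S(X) = Q T(Q⁻¹ X (Q⁻¹)^*) Q^*` for an invertible `Q`. -/
theorem stmt3 {k : ℕ}
    (T Tstar : Matrix (Fin k) (Fin k) ℂ → Matrix (Fin k) (Fin k) ℂ)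
    (hlin : IsLinearMap ℂ T) (hpos : IsPosMap T)
    (hadj : ∀ X Y : Matrix (Fin k) (Fin k) ℂ,
      (T X * Yᴴ).trace = (X * (Tstar Y)ᴴ).trace)
    (Q : Matrix (Fin k) (Fin k) ℂ) (hQ : IsUnit Q)
    (hprop : UniqueWProp T Tstar)
    (Sstar : Matrix (Fin k) (Fin k) ℂ → Matrix (Fin k) (Fin k) ℂ)
    (hSadj : ∀ X Y : Matrix (Fin k) (Fin k) ℂ,
      ((Q * T (Q⁻¹ * X * (Q⁻¹)ᴴ) * Qᴴ) * Yᴴ).trace = (X * (Sstar Y)ᴴ).trace) :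
    UniqueWProp (fun X => Q * T (Q⁻¹ * X * (Q⁻¹)ᴴ) * Qᴴ) Sstar := by
  classical
  open Stmt3Aux in
  intro V l hV hLV hIrr hSR
  have hQd : IsUnit Qᴴ := Stmt3Aux.unit_ct hQ
  have hQi : IsUnit Q⁻¹ := Stmt3Aux.unit_inv hQ
  set R : Matrix (Fin k) (Fin k) ℂ := (Qᴴ)⁻¹ with hRdef
  have hRu : IsUnit R := Stmt3Aux.unit_inv hQd
  have hRinv : R⁻¹ = Qᴴ := Stmt3Aux.inv_inv_eq hQd
  have hRct : R = (Q⁻¹)ᴴ := (Matrix.conjTranspose_nonsing_inv Q).symm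
  -- identify Sstar with the conjugation of Tstar by R
  have hSstar : Sstar = Stmt3Aux.conj R Tstar := by
    funext Y
    refine (Stmt3Aux.eq_of_forall_trace (fun X => ?_)).symm
    rw [← hSadj X Y]
    have hconjR : Stmt3Aux.conj R Tstar Y = (Qᴴ)⁻¹ * Tstar (Qᴴ * Y * Q) * Q⁻¹ := by
      show R * Tstar (R⁻¹ * Y * (R⁻¹)ᴴ) * Rᴴ = _
      rw [hRinv, conjTranspose_conjTranspose, Matrix.conjTranspose_nonsing_inv,
        conjTranspose_conjTranspose]
    rw [hconjR]
    set N := Tstar (Qᴴ * Y * Q) with hN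
    have e1 : ((Q * T (Q⁻¹ * X * (Q⁻¹)ᴴ) * Qᴴ) * Yᴴ).trace
        = ((T (Q⁻¹ * X * (Q⁻¹)ᴴ)) * (Qᴴ * Y * Q)ᴴ).trace := by
      have hct : (Qᴴ * Y * Q)ᴴ = Qᴴ * Yᴴ * Q := by
        simp only [conjTranspose_mul, conjTranspose_conjTranspose, Matrix.mul_assoc]
      rw [hct, Matrix.mul_assoc (Q * T (Q⁻¹ * X * (Q⁻¹)ᴴ)), Matrix.mul_assoc Q,
        Matrix.trace_mul_comm, Matrix.mul_assoc, Matrix.mul_assoc]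
    have e2 : (((Qᴴ)⁻¹ * N * Q⁻¹))ᴴ = (Q⁻¹)ᴴ * Nᴴ * Q⁻¹ := by
      simp only [conjTranspose_mul, Matrix.conjTranspose_nonsing_inv,
        conjTranspose_conjTranspose, Matrix.mul_assoc]
    have e3 : ((Q⁻¹ * X * (Q⁻¹)ᴴ) * Nᴴ).trace = (X * ((Q⁻¹)ᴴ * Nᴴ * Q⁻¹)).trace := by
      rw [Matrix.mul_assoc (Q⁻¹ * X), Matrix.mul_assoc Q⁻¹, Matrix.trace_mul_comm,
        Matrix.mul_assoc X]
    rw [e1, hadj, ← hN, e2, e3]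
  -- the projection V₁ corresponding to V
  set V₁ := Stmt3Aux.projMat (Submodule.map (Q⁻¹).mulVecLin (LinearMap.range V.mulVecLin))
    with hV₁def
  have hV₁p : IsOrthProj V₁ := Stmt3Aux.projMat_isOrthProj _
  have hV₁r : LinearMap.range V₁.mulVecLin
      = Submodule.map (Q⁻¹).mulVecLin (LinearMap.range V.mulVecLin) := Stmt3Aux.projMat_range _
  have hLV₁ : LeavesInv T V₁ := Stmt3Aux.leavesInv_transfer hQ hV hV₁p hV₁r T hLV
  have hIrr₁ : IsIrredOn T V₁ := Stmt3Aux.irred_transfer hQ hV hV₁p hV₁r T hIrr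
  have hSR₁ : HasSpecRadOn T V₁ l := Stmt3Aux.specRad_transfer hQ hV hV₁p hV₁r T l hSR
  obtain ⟨W, ⟨hWp, hWLI, hWirr, hWSR, hWrank, hWker⟩, hWuniq⟩ :=
    hprop V₁ l hV₁p hLV₁ hIrr₁ hSR₁
  -- the projection W' corresponding to W
  set W' := Stmt3Aux.projMat (Submodule.map R.mulVecLin (LinearMap.range W.mulVecLin))
    with hW'def
  have hW'p : IsOrthProj W' := Stmt3Aux.projMat_isOrthProj _
  have hW'r : LinearMap.range W'.mulVecLin
      = Submodule.map R.mulVecLin (LinearMap.range W.mulVecLin) := Stmt3Aux.projMat_range _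
  have hW'LI : LeavesInv Sstar W' := by
    rw [hSstar]
    exact Stmt3Aux.leavesInv_transfer (Stmt3Aux.unit_inv hRu) hWp hW'p
      (by rw [Stmt3Aux.inv_inv_eq hRu, hW'r]) (Stmt3Aux.conj R Tstar)
      (by rw [Stmt3Aux.conj_conj hRu]; exact hWLI)
  have hW'irr : IsIrredOn Sstar W' := by
    rw [hSstar]
    exact Stmt3Aux.irred_transfer (Stmt3Aux.unit_inv hRu) hWp hW'p
      (by rw [Stmt3Aux.inv_inv_eq hRu, hW'r]) (Stmt3Aux.conj R Tstar)
      (by rw [Stmt3Aux.conj_conj hRu]; exact hWirr)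
  have hW'SR : HasSpecRadOn Sstar W' l := by
    rw [hSstar]
    exact Stmt3Aux.specRad_transfer (Stmt3Aux.unit_inv hRu) hWp hW'p
      (by rw [Stmt3Aux.inv_inv_eq hRu, hW'r]) (Stmt3Aux.conj R Tstar) l
      (by rw [Stmt3Aux.conj_conj hRu]; exact hWSR)
  have hrankV₁V : V₁.rank = V.rank := by
    rw [Stmt3Aux.rank_def, Stmt3Aux.rank_def, hV₁r, Stmt3Aux.finrank_map_unit hQi]
  have hW'rank : W'.rank = V.rank := by
    rw [Stmt3Aux.rank_def W', hW'r, Stmt3Aux.finrank_map_unit hRu, ← Stmt3Aux.rank_def,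
      hWrank, hrankV₁V]
  have hrgV : LinearMap.range V.mulVecLin
      = Submodule.map Q.mulVecLin (LinearMap.range V₁.mulVecLin) := by
    rw [hV₁r, Stmt3Aux.map_inv_map hQ]
  have hkerW' : LinearMap.ker W'.mulVecLin
      = Submodule.map Q.mulVecLin (LinearMap.ker W.mulVecLin) :=
    Stmt3Aux.ker_transform hQ hWp hW'p (by rw [hW'r, hRct])
  have hkercond : LinearMap.ker W'.mulVecLin ⊓ LinearMap.range V.mulVecLin = ⊥ := by
    rw [hkerW', hrgV, ← Submodule.map_inf _ (Stmt3Aux.mulVecLin_inj hQ), hWker,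
      Submodule.map_bot]
  refine ⟨W', ⟨hW'p, hW'LI, hW'irr, hW'SR, hW'rank, hkercond⟩, ?_⟩
  -- uniqueness
  rintro W'' ⟨hW2p, hW2LI, hW2irr, hW2SR, hW2rank, hW2ker⟩
  set W₂ := Stmt3Aux.projMat (Submodule.map (R⁻¹).mulVecLin (LinearMap.range W''.mulVecLin))
    with hW₂def
  have hW₂p : IsOrthProj W₂ := Stmt3Aux.projMat_isOrthProj _
  have hW₂r : LinearMap.range W₂.mulVecLin
      = Submodule.map (R⁻¹).mulVecLin (LinearMap.range W''.mulVecLin) :=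
    Stmt3Aux.projMat_range _
  have hLI₂ : LeavesInv Tstar W₂ :=
    Stmt3Aux.leavesInv_transfer hRu hW2p hW₂p hW₂r Tstar (by rw [← hSstar]; exact hW2LI)
  have hIrr₂ : IsIrredOn Tstar W₂ :=
    Stmt3Aux.irred_transfer hRu hW2p hW₂p hW₂r Tstar (by rw [← hSstar]; exact hW2irr)
  have hSR₂ : HasSpecRadOn Tstar W₂ l :=
    Stmt3Aux.specRad_transfer hRu hW2p hW₂p hW₂r Tstar l (by rw [← hSstar]; exact hW2SR)
  have hrank₂ : W₂.rank = V₁.rank := by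
    rw [Stmt3Aux.rank_def W₂, hW₂r, Stmt3Aux.finrank_map_unit (Stmt3Aux.unit_inv hRu),
      ← Stmt3Aux.rank_def, hW2rank, ← hrankV₁V]
  have hker₂ : LinearMap.ker W₂.mulVecLin ⊓ LinearMap.range V₁.mulVecLin = ⊥ := by
    have hk : LinearMap.ker W₂.mulVecLin
        = Submodule.map (Q⁻¹).mulVecLin (LinearMap.ker W''.mulVecLin) :=
      Stmt3Aux.ker_transform hQi hW2p hW₂p
        (by rw [hW₂r, Stmt3Aux.inv_inv_eq hQ, hRinv])
    rw [hk, hV₁r, ← Submodule.map_inf _ (Stmt3Aux.mulVecLin_inj hQi), hW2ker,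
      Submodule.map_bot]
  have hWeq : W₂ = W := hWuniq W₂ ⟨hW₂p, hLI₂, hIrr₂, hSR₂, hrank₂, hker₂⟩
  apply Stmt3Aux.orthProj_ext hW2p hW'p
  rw [hW'r, ← hWeq, hW₂r, Stmt3Aux.map_inv_map hRu]


end
end

section
/- Let B ∈ M_k(ℂ)⊗M_k(ℂ) ≅ M_{k²}(ℂ) be a positive semidefinite Hermitian matrix. Suppose there is a vector v ∈ Im(B) ⊆ ℂ^k⊗ℂ^k with tensor rank k. Then there is an invertible matrix P ∈ M_k(ℂ) such that, setting A = (P⊗Id)B(P⊗Id)*, one has Im(G_A(X^t)) ⊇ Im(X) for every positive semidefinite X ∈ M_k(ℂ). -/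
open scoped Kronecker ComplexOrder
open Matrix

noncomputable section

lemma real_of_nonneg {z : ℂ} (hz : 0 ≤ z) : z = (z.re : ℂ) := by
  rw [Complex.le_def] at hz
  exact Complex.ext (by simp) (by simp [← hz.2])

lemma cs_dot {n : Type*} [Fintype n] (u y : n → ℂ) :
    (star y ⬝ᵥ u) * (star u ⬝ᵥ y) ≤ (star u ⬝ᵥ u) * (star y ⬝ᵥ y) := by
  have h := inner_mul_inner_self_le (𝕜 := ℂ) (E := EuclideanSpace ℂ n)
    ((WithLp.equiv 2 _).symm u) ((WithLp.equiv 2 _).symm y)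
  rw [EuclideanSpace.inner_toLp_toLp, EuclideanSpace.inner_toLp_toLp,
    EuclideanSpace.inner_toLp_toLp, EuclideanSpace.inner_toLp_toLp] at h
  simp only [WithLp.equiv_symm_apply, WithLp.ofLp_toLp] at h
  rw [dotProduct_comm y (star u), dotProduct_comm u (star y), dotProduct_comm u (star u),
    dotProduct_comm y (star y)] at h
  have h1 : star y ⬝ᵥ u = star (star u ⬝ᵥ y) := by
    simp [dotProduct, mul_comm]
  have h2 : (star u ⬝ᵥ u) = ((star u ⬝ᵥ u).re : ℂ) := real_of_nonneg (dotProduct_star_self_nonneg u)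
  have h3 : (star y ⬝ᵥ y) = ((star y ⬝ᵥ y).re : ℂ) := real_of_nonneg (dotProduct_star_self_nonneg y)
  set a := star u ⬝ᵥ y with ha
  have l1 : star a * a = (Complex.normSq a : ℂ) := by
    rw [mul_comm, Complex.star_def, Complex.mul_conj]
  rw [h1, l1, h2, h3, ← Complex.ofReal_mul, Complex.real_le_real]
  have l2 : Complex.normSq a = ‖a‖ * ‖a‖ := by
    rw [Complex.normSq_eq_norm_sq, sq]
  rw [h1, norm_star] at h
  rw [l2]
  simpa [RCLike.re_to_complex] using h

lemma dot_self_selfAdj {n : Type*} [Fintype n] (u : n → ℂ) : star (star u ⬝ᵥ u) = star u ⬝ᵥ u := by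
  simp [dotProduct, mul_comm]

lemma psd_one_sub {n : Type*} [Fintype n] [DecidableEq n] (u : n → ℂ) :
    ((star u ⬝ᵥ u) • (1 : Matrix n n ℂ) - vecMulVec u (star u)).PosSemidef := by
  refine Matrix.PosSemidef.of_dotProduct_mulVec_nonneg ?_ ?_
  · ext i j
    simp only [conjTranspose_apply, Matrix.sub_apply, Matrix.smul_apply, Matrix.one_apply,
      vecMulVec_apply, star_sub, star_mul', star_star, smul_eq_mul, mul_ite, mul_one, mul_zero,
      Pi.star_apply]
    congr 1
    · split
      · next h => subst h; simp [dot_self_selfAdj]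
      · next h => rw [eq_comm] at h; simp [h, dot_self_selfAdj]
    · rw [mul_comm]
  · intro y
    have expand : star y ⬝ᵥ ((star u ⬝ᵥ u) • (1 : Matrix n n ℂ)
        - vecMulVec u (star u)).mulVec y
        = (star u ⬝ᵥ u) * (star y ⬝ᵥ y) - (star y ⬝ᵥ u) * (star u ⬝ᵥ y) := by
      rw [sub_mulVec, dotProduct_sub, smul_mulVec, one_mulVec, dotProduct_smul]
      congr 1
      simp only [mulVec, vecMulVec_apply, dotProduct, Finset.mul_sum, Finset.sum_mul]
      rw [Finset.sum_comm]
      apply Finset.sum_congr rfl; intros; apply Finset.sum_congr rfl; intros; ring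
    rw [expand, sub_nonneg]
    exact cs_dot u y

lemma vecMulVec_mulVec_star {n m : Type*} [Fintype n] [Fintype m] (A : Matrix n m ℂ) (w : m → ℂ) :
    vecMulVec (A.mulVec w) (star (A.mulVec w)) = A * vecMulVec w (star w) * Aᴴ := by
  ext i j
  simp only [vecMulVec_apply, mulVec, dotProduct, mul_apply, conjTranspose_apply,
    Pi.star_apply, star_sum, star_mul', Finset.sum_mul, Finset.mul_sum]
  apply Finset.sum_congr rfl; intros; apply Finset.sum_congr rfl; intros; ring


lemma Gmap_sub {n p : Type*} [Fintype n] [Fintype p]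
    (A B : Matrix (n × p) (n × p) ℂ) (X : Matrix n n ℂ) :
    Gmap (A - B) X = Gmap A X - Gmap B X := by
  ext j j'
  simp [Gmap, mul_sub, Finset.sum_sub_distrib]

lemma Gmap_smul {n p : Type*} [Fintype n] [Fintype p]
    (c : ℂ) (A : Matrix (n × p) (n × p) ℂ) (X : Matrix n n ℂ) :
    Gmap (c • A) X = c • Gmap A X := by
  ext j j'
  simp [Gmap, Finset.mul_sum]
  apply Finset.sum_congr rfl; intros; apply Finset.sum_congr rfl; intros; ring

lemma Gmap_mul_left {n p : Type*} [Fintype n] [Fintype p] [DecidableEq p]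
    (P : Matrix n n ℂ) (C : Matrix (n × p) (n × p) ℂ) (X : Matrix n n ℂ) :
    Gmap ((P ⊗ₖ (1 : Matrix p p ℂ)) * C) X = Gmap C (X * P) := by
  ext j j'
  simp only [Gmap, Matrix.of_apply, mul_apply, kroneckerMap_apply, Matrix.one_apply,
    Fintype.sum_prod_type, mul_ite, mul_one, mul_zero, ite_mul, zero_mul,
    Finset.sum_ite_eq, Finset.sum_ite_eq', Finset.mem_univ, if_true,
    Finset.mul_sum, Finset.sum_mul]
  apply Finset.sum_congr rfl; intro i _
  rw [Finset.sum_comm]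
  apply Finset.sum_congr rfl; intros; apply Finset.sum_congr rfl; intros; ring

lemma Gmap_mul_right {n p : Type*} [Fintype n] [Fintype p] [DecidableEq p]
    (Q : Matrix n n ℂ) (C : Matrix (n × p) (n × p) ℂ) (X : Matrix n n ℂ) :
    Gmap (C * (Q ⊗ₖ (1 : Matrix p p ℂ))ᴴ) X = Gmap C (Qᴴ * X) := by
  ext j j'
  simp only [Gmap, Matrix.of_apply, mul_apply, conjTranspose_apply, kroneckerMap_apply,
    Matrix.one_apply, Fintype.sum_prod_type, mul_ite, mul_one, mul_zero, ite_mul, zero_mul,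
    apply_ite (star : ℂ → ℂ), star_one, star_zero,
    Finset.sum_ite_eq, Finset.sum_ite_eq', Finset.mem_univ, if_true,
    Finset.mul_sum, Finset.sum_mul]
  conv_lhs => rw [show (∑ x : n, ∑ x_1 : n, ∑ i : n, X x x_1 * (C (x_1, j) (i, j') * star (Q x i))) = ∑ x : n, ∑ i : n, ∑ x_1 : n, X x x_1 * (C (x_1, j) (i, j') * star (Q x i)) from Finset.sum_congr rfl fun i _ => Finset.sum_comm]
  rw [Finset.sum_comm]
  apply Finset.sum_congr rfl; intro c _
  rw [Finset.sum_comm]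
  apply Finset.sum_congr rfl; intros; apply Finset.sum_congr rfl; intros; ring

lemma Gmap_kron {n p : Type*} [Fintype n] [Fintype p] [DecidableEq n] [DecidableEq p]
    (P Q : Matrix n n ℂ) (C : Matrix (n × p) (n × p) ℂ) (X : Matrix n n ℂ) :
    Gmap ((P ⊗ₖ (1 : Matrix p p ℂ)) * C * (Q ⊗ₖ (1 : Matrix p p ℂ))ᴴ) X
      = Gmap C (Qᴴ * X * P) := by
  rw [Matrix.mul_assoc, Gmap_mul_left, Gmap_mul_right, Matrix.mul_assoc]

lemma Gmap_vecMulVec {n p : Type*} [Fintype n] [Fintype p]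
    (v : n × p → ℂ) (Y : Matrix n n ℂ) :
    Gmap (vecMulVec v (star v)) Y
      = (Matrix.of fun i j => v (i, j))ᵀ * Yᵀ * ((Matrix.of fun i j => v (i, j))ᴴ)ᵀ := by
  ext j j'
  simp only [Gmap, Matrix.of_apply, mul_apply, vecMulVec_apply, Pi.star_apply,
    transpose_apply, conjTranspose_apply, Finset.sum_mul, Finset.mul_sum]
  apply Finset.sum_congr rfl; intros; apply Finset.sum_congr rfl; intros; ring

lemma Gmap_psd {n p : Type*} [Fintype n] [Fintype p]
    {C : Matrix (n × p) (n × p) ℂ} (hC : C.PosSemidef)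
    {X : Matrix n n ℂ} (hX : X.PosSemidef) : (Gmap C Xᵀ).PosSemidef := by
  obtain ⟨N, hN⟩ : ∃ N : Matrix n n ℂ, X = Nᴴ * N := by
    classical
    open scoped MatrixOrder in exact CStarAlgebra.nonneg_iff_eq_star_mul_self.mp hX.nonneg
  refine Matrix.PosSemidef.of_dotProduct_mulVec_nonneg ?_ ?_
  · ext j j'
    have hXh : ∀ i l, star (X l i) = X i l := fun i l => congrFun (congrFun hX.1 i) l
    have hCh : ∀ a b, star (C a b) = C b a := fun a b => congrFun (congrFun hC.1 b) a
    simp only [conjTranspose_apply, Gmap, Matrix.of_apply, transpose_apply, star_sum, star_mul',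
      hXh, hCh]
    exact Finset.sum_comm
  · intro y
    have key : star y ⬝ᵥ (Gmap C Xᵀ).mulVec y
        = ∑ s : n, star (fun q : n × p => N s q.1 * y q.2) ⬝ᵥ
            C.mulVec (fun q : n × p => N s q.1 * y q.2) := by
      subst hN
      simp only [Gmap, dotProduct, mulVec, Matrix.of_apply, transpose_apply, mul_apply,
        conjTranspose_apply, Pi.star_apply, star_mul', Fintype.sum_prod_type,
        Finset.sum_mul, Finset.mul_sum]
      conv_lhs => enter [2, x, 2, x1, 2, x2]; rw [Finset.sum_comm]
      conv_lhs => enter [2, x, 2, x1]; rw [Finset.sum_comm]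
      conv_lhs => enter [2, x]; rw [Finset.sum_comm]
      conv_lhs => rw [Finset.sum_comm]
      conv_lhs => enter [2, i, 2, x, 2, x1]; rw [Finset.sum_comm]
      conv_lhs => enter [2, i, 2, x]; rw [Finset.sum_comm]
      conv_lhs => enter [2, i]; rw [Finset.sum_comm]
      conv_lhs => enter [2, i, 2, x3, 2, x]; rw [Finset.sum_comm]
      apply Finset.sum_congr rfl; intros; apply Finset.sum_congr rfl; intros
      apply Finset.sum_congr rfl; intros; apply Finset.sum_congr rfl; intros
      apply Finset.sum_congr rfl; intros; ring
    rw [key]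
    exact Finset.sum_nonneg fun s _ => hC.dotProduct_mulVec_nonneg _

lemma range_le_of_psd_le {k : ℕ} {X G : Matrix (Fin k) (Fin k) ℂ}
    (hX : X.PosSemidef) (hG : G.PosSemidef) (c : ℂ)
    (h : (c • G - X).PosSemidef) :
    LinearMap.range X.mulVecLin ≤ LinearMap.range G.mulVecLin := by
  have hker : ∀ z, G.mulVec z = 0 → X.mulVec z = 0 := by
    intro z hz
    have h1 : 0 ≤ star z ⬝ᵥ X.mulVec z := hX.dotProduct_mulVec_nonneg z
    have h2 := h.dotProduct_mulVec_nonneg z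
    rw [sub_mulVec, smul_mulVec, hz, smul_zero, zero_sub, dotProduct_neg] at h2
    have h3 : star z ⬝ᵥ X.mulVec z = 0 := le_antisymm (neg_nonneg.mp h2) h1
    exact (hX.dotProduct_mulVec_zero_iff z).mp h3
  have hGdot : ∀ z w, G.mulVec z = 0 → star z ⬝ᵥ G.mulVec w = 0 := by
    intro z w hz
    rw [dotProduct_mulVec, show star z ᵥ* G = star z ᵥ* Gᴴ by rw [hG.1],
      ← star_mulVec, hz]
    simp
  have hdisj : LinearMap.range G.mulVecLin ⊓ LinearMap.ker G.mulVecLin = ⊥ := by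
    rw [Submodule.eq_bot_iff]
    rintro x ⟨⟨z, rfl⟩, hk⟩
    have hk' : G *ᵥ (G.mulVecLin z) = 0 := hk
    rw [mulVecLin_apply] at hk' ⊢
    have : star (G.mulVec z) ⬝ᵥ G.mulVec z = 0 := by
      rw [star_mulVec, ← dotProduct_mulVec, show Gᴴ = G from hG.1, hk', dotProduct_zero]
    exact dotProduct_star_self_eq_zero.mp this
  have hsup : LinearMap.range G.mulVecLin ⊔ LinearMap.ker G.mulVecLin = ⊤ := by
    apply Submodule.eq_top_of_finrank_eq
    have e1 := Submodule.finrank_sup_add_finrank_inf_eq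
      (LinearMap.range G.mulVecLin) (LinearMap.ker G.mulVecLin)
    have e2 := LinearMap.finrank_range_add_finrank_ker G.mulVecLin
    rw [hdisj, finrank_bot, add_zero] at e1
    rw [e1, e2]
  rintro x ⟨u, rfl⟩
  have hx : X.mulVecLin u ∈ LinearMap.range G.mulVecLin ⊔ LinearMap.ker G.mulVecLin := by
    rw [hsup]; trivial
  obtain ⟨g, hg, z, hzk, hgz⟩ := Submodule.mem_sup.mp hx
  obtain ⟨hh, hhg⟩ := hg
  rw [LinearMap.mem_ker, mulVecLin_apply] at hzk
  have hzX : X.mulVec z = 0 := hker z hzk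
  have hz0 : z = 0 := by
    have e1 : star z ⬝ᵥ X.mulVecLin u = 0 := by
      rw [mulVecLin_apply, dotProduct_mulVec, show star z ᵥ* X = star z ᵥ* Xᴴ by rw [hX.1],
        ← star_mulVec, hzX]
      simp
    have e2 : star z ⬝ᵥ g = 0 := by
      rw [← hhg, mulVecLin_apply]
      exact hGdot z hh hzk
    have e3 : star z ⬝ᵥ z = 0 := by
      have := congrArg (fun t => star z ⬝ᵥ t) hgz
      simp only [dotProduct_add] at this
      rw [e1, e2, zero_add] at this
      exact this
    exact dotProduct_star_self_eq_zero.mp e3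
  rw [hz0, add_zero] at hgz
  exact hgz ▸ ⟨hh, hhg⟩


set_option maxHeartbeats 1000000 in
open scoped MatrixOrder in
/-- Lemma 7: if `B ∈ M_k ⊗ M_k` is positive semidefinite and its range contains a
vector of tensor rank `k`, then there is an invertible `P` such that, for
`A = (P ⊗ Id) B (P ⊗ Id)^*`, one has `Im(G_A(Xᵗ)) ⊇ Im(X)` for every positive
semidefinite `X`. -/
theorem stmt4 {k : ℕ} (B : Matrix (Fin k × Fin k) (Fin k × Fin k) ℂ)
    (hB : B.PosSemidef) (v : Fin k × Fin k → ℂ)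
    (hv : v ∈ LinearMap.range B.mulVecLin)
    (hrank : IsUnit (Matrix.of fun i j => v (i, j) : Matrix (Fin k) (Fin k) ℂ)) :
    ∃ P : Matrix (Fin k) (Fin k) ℂ, IsUnit P ∧
      ∀ X : Matrix (Fin k) (Fin k) ℂ, X.PosSemidef →
        LinearMap.range X.mulVecLin ≤
          LinearMap.range (Gmap ((P ⊗ₖ (1 : Matrix (Fin k) (Fin k) ℂ)) * B *
            (P ⊗ₖ (1 : Matrix (Fin k) (Fin k) ℂ))ᴴ) Xᵀ).mulVecLin := by
  classical
  set M : Matrix (Fin k) (Fin k) ℂ := Matrix.of fun i j => v (i, j) with hM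
  obtain ⟨w, hw⟩ := hv
  rw [mulVecLin_apply] at hw
  have hSps : (CFC.sqrt B).PosSemidef := (CFC.sqrt_nonneg B).posSemidef
  have hSS : CFC.sqrt B * CFC.sqrt B = B := CFC.sqrt_mul_sqrt_self B hB.nonneg
  set S := CFC.sqrt B with hS
  set u : Fin k × Fin k → ℂ := S.mulVec w with hu
  set c : ℂ := star u ⬝ᵥ u with hc
  have hvSu : S.mulVec u = v := by
    rw [hu, mulVec_mulVec, hSS, hw]
  have hdet : IsUnit M.det := (Matrix.isUnit_iff_isUnit_det M).mp hrank
  have hPunit : IsUnit M⁻¹ := by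
    rw [Matrix.isUnit_iff_isUnit_det, Matrix.det_nonsing_inv]
    exact isUnit_ringInverse.mpr hdet
  refine ⟨M⁻¹, hPunit, ?_⟩
  intro X hX
  have hPM : M⁻¹ * M = 1 := Matrix.nonsing_inv_mul M hdet
  set P := M⁻¹ with hP
  set A := (P ⊗ₖ (1 : Matrix (Fin k) (Fin k) ℂ)) * B *
    (P ⊗ₖ (1 : Matrix (Fin k) (Fin k) ℂ))ᴴ with hA
  have hApsd : A.PosSemidef := hB.mul_mul_conjTranspose_same _
  have hGA : (Gmap A Xᵀ).PosSemidef := Gmap_psd hApsd hX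
  have hvv : vecMulVec v (star v) = S * vecMulVec u (star u) * Sᴴ := by
    rw [← hvSu]; exact vecMulVec_mulVec_star S u
  have hsand : (c • B - vecMulVec v (star v)).PosSemidef := by
    have h1 := (psd_one_sub u).mul_mul_conjTranspose_same S
    have h2 : S * (c • 1 - vecMulVec u (star u)) * Sᴴ = c • B - vecMulVec v (star v) := by
      rw [hvv, Matrix.mul_sub, Matrix.sub_mul]
      congr 1
      rw [Matrix.mul_smul, Matrix.smul_mul, Matrix.mul_one, show Sᴴ = S from hSps.1, hSS]
    rwa [h2] at h1
  have hsand2 := hsand.mul_mul_conjTranspose_same (P ⊗ₖ (1 : Matrix (Fin k) (Fin k) ℂ))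
  have hexpand : (P ⊗ₖ (1 : Matrix (Fin k) (Fin k) ℂ)) * (c • B - vecMulVec v (star v)) *
      (P ⊗ₖ (1 : Matrix (Fin k) (Fin k) ℂ))ᴴ
      = c • A - (P ⊗ₖ (1 : Matrix (Fin k) (Fin k) ℂ)) * vecMulVec v (star v) *
        (P ⊗ₖ (1 : Matrix (Fin k) (Fin k) ℂ))ᴴ := by
    rw [Matrix.mul_sub, Matrix.sub_mul, Matrix.mul_smul, Matrix.smul_mul, hA]
  have hGvv : Gmap ((P ⊗ₖ (1 : Matrix (Fin k) (Fin k) ℂ)) * vecMulVec v (star v) *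
      (P ⊗ₖ (1 : Matrix (Fin k) (Fin k) ℂ))ᴴ) Xᵀ = X := by
    rw [Gmap_kron, Gmap_vecMulVec, ← hM]
    have e : Mᵀ * (Pᴴ * Xᵀ * P)ᵀ * (Mᴴ)ᵀ = (P * M)ᵀ * X * ((P * M)ᴴ)ᵀ := by
      simp [transpose_mul, conjTranspose_mul, Matrix.mul_assoc]
    rw [e, hPM]
    simp
  have hfinal : (c • Gmap A Xᵀ - X).PosSemidef := by
    rw [hexpand] at hsand2
    have h3 := Gmap_psd hsand2 hX
    rwa [Gmap_sub, Gmap_smul, hGvv] at h3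
  exact range_le_of_psd_le hX hGA c hfinal

end
end

section
/- Let T_1 : M_k(ℂ) → M_k(ℂ) be a completely positive map and let V_1 be the block-diagonal orthogonal projection with blocks Id_{s×s} and 0_{(k−s)×(k−s)}, such that T_1(V_1M_kV_1) ⊆ V_1M_kV_1, T_1|_{V_1M_kV_1} is irreducible, and V_1 T_1*(V_1) V_1 = V_1. Define f : M_{(k−s)×s}(ℂ) → ℝ_{≥0} by f(X) = tr( T_1*( [[Id, X*],[X, XX*]] ) · [[X*X, −X*],[−X, Id]] ), using 2×2 block matrices with blocks of sizes s and k−s. Then the following are equivalent: (a) W is a solution to Problem 1 for (T_1, V_1); (b) W is the orthogonal projection onto the column space of the k×s block matrix [Id_{s×s}; S] for some S ∈ M_{(k−s)×s}(ℂ) with f(S) = 0. -/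
open scoped Kronecker ComplexOrder
open Matrix

noncomputable section

/-- The quadratic function `f` of Lemma 11, with `T₁^*` given explicitly:
`f(X) = tr( T₁^*([[Id, X^*],[X, XX^*]]) · [[X^*X, −X^*],[−X, Id]] )`. -/
def fFun {s t : ℕ}
    (T1star : Matrix (Fin s ⊕ Fin t) (Fin s ⊕ Fin t) ℂ →
      Matrix (Fin s ⊕ Fin t) (Fin s ⊕ Fin t) ℂ)
    (X : Matrix (Fin t) (Fin s) ℂ) : ℂ :=
  (T1star (Matrix.fromBlocks 1 Xᴴ X (X * Xᴴ)) *
    Matrix.fromBlocks (Xᴴ * X) (-Xᴴ) (-X) 1).trace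

/-- The `k × s` block matrix `[Id_{s×s}; S]`. -/
def stacked {s t : ℕ} (S : Matrix (Fin t) (Fin s) ℂ) :
    Matrix (Fin s ⊕ Fin t) (Fin s) ℂ :=
  Matrix.of fun i j => Sum.elim (fun a => if a = j then (1 : ℂ) else 0) (fun b => S b j) i

namespace Aux11

variable {n m p d : Type*} [Fintype n] [Fintype m] [Fintype p] [Fintype d]

lemma ext_mulVec [DecidableEq n] {A B : Matrix m n ℂ} (h : ∀ x, A *ᵥ x = B *ᵥ x) : A = B := by
  ext i j
  have := congrFun (h (Pi.single j 1)) i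
  simpa using this

lemma trace_repr (E : Matrix m p ℂ) :
    (E * Eᴴ).trace = ∑ a, E a ⬝ᵥ star (E a) := by
  simp [Matrix.trace, Matrix.diag, Matrix.mul_apply, Matrix.conjTranspose_apply, dotProduct]

lemma trace_mul_conjTranspose_nonneg (E : Matrix m p ℂ) :
    0 ≤ (E * Eᴴ).trace := by
  rw [trace_repr]
  exact Finset.sum_nonneg fun a _ => dotProduct_self_star_nonneg _

lemma eq_zero_of_trace_mul_conjTranspose {E : Matrix m p ℂ}
    (h : (E * Eᴴ).trace = 0) : E = 0 := by
  rw [trace_repr] at h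
  have h2 := (Finset.sum_eq_zero_iff_of_nonneg
    (fun a _ => dotProduct_self_star_nonneg (E a))).mp h
  ext a b
  have := dotProduct_self_star_eq_zero.mp (h2 a (Finset.mem_univ a))
  simpa using congrFun this b

lemma eq_zero_of_sum_mul_conjTranspose {r : ℕ} (C : Fin r → Matrix m p ℂ)
    (h : ∑ i, C i * (C i)ᴴ = 0) (i : Fin r) : C i = 0 := by
  have ht : ∑ j, ((C j) * (C j)ᴴ).trace = 0 := by
    rw [← Matrix.trace_sum, h, Matrix.trace_zero]
  exact eq_zero_of_trace_mul_conjTranspose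
    ((Finset.sum_eq_zero_iff_of_nonneg
      (fun j _ => trace_mul_conjTranspose_nonneg (C j))).mp ht i (Finset.mem_univ i))

section Kraus

variable [DecidableEq n]

lemma leavesInv_of_kraus {r : ℕ} (A : Fin r → Matrix n n ℂ) {T : Matrix n n ℂ → Matrix n n ℂ}
    (hT : ∀ X, T X = ∑ i, A i * X * (A i)ᴴ) {U : Matrix n n ℂ} (hU : IsOrthProj U)
    (h : ∀ i, U * (A i * U) = A i * U) : LeavesInv T U := by
  intro X
  have hUH : Uᴴ = U := hU.1
  have hUU : ∀ Y : Matrix n n ℂ, U * (U * Y) = U * Y := fun Y => by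
    rw [← Matrix.mul_assoc, hU.2]
  rw [hT]
  rw [Finset.mul_sum, Finset.sum_mul]
  refine Finset.sum_congr rfl fun i _ => ?_
  have e1 : A i * (U * X * U) * (A i)ᴴ = (A i * U) * X * ((A i * U))ᴴ := by
    simp only [Matrix.conjTranspose_mul, hUH, Matrix.mul_assoc]
  have e2 : U * (A i * (U * X * U) * (A i)ᴴ) * U = (U * (A i * U)) * X * (U * (A i * U))ᴴ := by
    simp only [Matrix.conjTranspose_mul, hUH, Matrix.mul_assoc, hUU]
  rw [e2, h i, e1]

lemma kraus_of_leavesInv {r : ℕ} (A : Fin r → Matrix n n ℂ) {T : Matrix n n ℂ → Matrix n n ℂ}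
    (hT : ∀ X, T X = ∑ i, A i * X * (A i)ᴴ) {U : Matrix n n ℂ} (hU : IsOrthProj U)
    (h : LeavesInv T U) (i : Fin r) : U * (A i * U) = A i * U := by
  have hUH : Uᴴ = U := hU.1
  have h1 : T U = U * T U * U := by
    have := h 1
    rwa [Matrix.mul_one, hU.2] at this
  set D := 1 - U with hD
  have hDU : D * U = 0 := by rw [hD, Matrix.sub_mul, Matrix.one_mul, hU.2, sub_self]
  have hUD : U * D = 0 := by rw [hD, Matrix.mul_sub, Matrix.mul_one, hU.2, sub_self]
  have hDH : Dᴴ = D := by rw [hD, Matrix.conjTranspose_sub, Matrix.conjTranspose_one, hUH]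
  have e2 : D * T U * D = 0 := by
    conv_lhs => rw [h1]
    calc D * (U * T U * U) * D = ((D * U) * T U) * (U * D) := by
          simp only [Matrix.mul_assoc]
      _ = 0 := by rw [hDU, hUD, Matrix.zero_mul, Matrix.zero_mul]
  have e3 : ∑ j, (D * (A j * U)) * (D * (A j * U))ᴴ = 0 := by
    have e1 : ∀ j, (D * (A j * U)) * (D * (A j * U))ᴴ = D * (A j * U * (A j)ᴴ) * D := by
      intro j
      have hUU : ∀ Y : Matrix n n ℂ, U * (U * Y) = U * Y := fun Y => by
        rw [← Matrix.mul_assoc, hU.2]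
      simp only [Matrix.conjTranspose_mul, hUH, hDH, Matrix.mul_assoc, hUU]
    rw [hT] at e2
    rw [Finset.sum_congr rfl fun j _ => e1 j]
    rw [← e2, Finset.mul_sum, Finset.sum_mul]
  have := eq_zero_of_sum_mul_conjTranspose _ e3 i
  have h4 : A i * U - U * (A i * U) = 0 := by
    have : (1 - U) * (A i * U) = 0 := this
    rwa [Matrix.sub_mul, Matrix.one_mul] at this
  rw [sub_eq_zero] at h4
  exact h4.symm

end Kraus

end Aux11

namespace Aux11
set_option linter.unusedSectionVars false
variable {n m p d : Type*} [Fintype n] [Fintype m] [Fintype p] [Fintype d]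
  [DecidableEq n] [DecidableEq d]

section ProjOf

/-- orthogonal projection onto the column space of `B`. -/
def projOf (B : Matrix n d ℂ) : Matrix n n ℂ := B * (Bᴴ * B)⁻¹ * Bᴴ

variable {B : Matrix n d ℂ} (hB : (Bᴴ * B).PosDef)
include hB

lemma inv_mul_self' : (Bᴴ * B)⁻¹ * (Bᴴ * B) = 1 :=
  Matrix.nonsing_inv_mul _ ((Matrix.isUnit_iff_isUnit_det _).mp hB.isUnit)

lemma projOf_mul_self : projOf B * B = B := by
  calc projOf B * B = B * ((Bᴴ * B)⁻¹ * (Bᴴ * B)) := by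
        simp only [projOf, Matrix.mul_assoc]
    _ = B := by rw [inv_mul_self' hB, Matrix.mul_one]

lemma projOf_isOrthProj : IsOrthProj (projOf B) := by
  constructor
  · show (projOf B)ᴴ = projOf B
    have hinv : ((Bᴴ * B)⁻¹)ᴴ = (Bᴴ * B)⁻¹ := (hB.isHermitian.inv).eq
    simp only [projOf, Matrix.conjTranspose_mul, Matrix.conjTranspose_conjTranspose, hinv,
      Matrix.mul_assoc]
  · calc projOf B * projOf B
        = (projOf B * B) * ((Bᴴ * B)⁻¹ * Bᴴ) := by simp only [projOf, Matrix.mul_assoc]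
      _ = projOf B := by rw [projOf_mul_self hB]; simp only [projOf, Matrix.mul_assoc]

lemma mulVec_injective_of_posDef (x : d → ℂ) (hx : B *ᵥ x = 0) : x = 0 := by
  have : x = ((Bᴴ * B)⁻¹ * (Bᴴ * B)) *ᵥ x := by rw [inv_mul_self' hB, Matrix.one_mulVec]
  rw [this, ← Matrix.mulVec_mulVec, ← Matrix.mulVec_mulVec, hx, Matrix.mulVec_zero,
    Matrix.mulVec_zero]

lemma range_projOf :
    LinearMap.range (projOf B).mulVecLin = LinearMap.range B.mulVecLin := by
  apply le_antisymm
  · rintro _ ⟨x, rfl⟩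
    exact ⟨((Bᴴ * B)⁻¹ * Bᴴ) *ᵥ x, by
      simp only [Matrix.mulVecLin_apply, projOf, Matrix.mulVec_mulVec, Matrix.mul_assoc]⟩
  · rintro _ ⟨x, rfl⟩
    exact ⟨B *ᵥ x, by
      simp only [Matrix.mulVecLin_apply, Matrix.mulVec_mulVec, projOf_mul_self hB]⟩

end ProjOf

section OrthProj

lemma fix_of_mem_range {P : Matrix n n ℂ} (hP : IsOrthProj P) {x : n → ℂ}
    (hx : x ∈ LinearMap.range P.mulVecLin) : P *ᵥ x = x := by
  obtain ⟨y, rfl⟩ := hx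
  simp only [Matrix.mulVecLin_apply, Matrix.mulVec_mulVec, hP.2]

lemma mul_eq_of_range_le {P Q : Matrix n n ℂ} (hP : IsOrthProj P)
    (h : LinearMap.range Q.mulVecLin ≤ LinearMap.range P.mulVecLin) : P * Q = Q := by
  apply ext_mulVec
  intro x
  rw [← Matrix.mulVec_mulVec]
  exact fix_of_mem_range hP (h ⟨x, rfl⟩)

lemma orthProj_eq_of_range_eq {P Q : Matrix n n ℂ} (hP : IsOrthProj P) (hQ : IsOrthProj Q)
    (h : LinearMap.range P.mulVecLin = LinearMap.range Q.mulVecLin) : P = Q := by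
  have h1 : Q * P = P := mul_eq_of_range_le hQ h.le
  have h2 : P * Q = Q := mul_eq_of_range_le hP h.ge
  have h3 := congrArg Matrix.conjTranspose h1
  rw [Matrix.conjTranspose_mul, hP.1.eq, hQ.1.eq] at h3
  rw [← h2, h3]

lemma mul_eq_of_ker_le {P Q : Matrix n n ℂ} (hQ : IsOrthProj Q)
    (hker : ∀ x, Q *ᵥ x = 0 → P *ᵥ x = 0) : P * Q = P := by
  apply ext_mulVec
  intro x
  rw [← Matrix.mulVec_mulVec]
  have h0 : Q *ᵥ (x - Q *ᵥ x) = 0 := by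
    rw [Matrix.mulVec_sub, Matrix.mulVec_mulVec, hQ.2, sub_self]
  have := hker _ h0
  rw [Matrix.mulVec_sub, sub_eq_zero] at this
  exact this.symm

end OrthProj

section BasisMatrix

lemma exists_basis_matrix (G : Submodule ℂ (n → ℂ)) :
    ∃ (k : ℕ) (B : Matrix n (Fin k) ℂ), (∀ x, B *ᵥ x = 0 → x = 0) ∧
      LinearMap.range B.mulVecLin = G := by
  classical
  let b := Module.finBasis ℂ G
  set k := Module.finrank ℂ G
  set B : Matrix n (Fin k) ℂ := Matrix.of fun i j => (b j : n → ℂ) i with hBdef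
  have hvec : ∀ x : Fin k → ℂ, B *ᵥ x = ((∑ j, x j • b j : G) : n → ℂ) := by
    intro x
    funext i
    rw [show ((∑ j, x j • b j : G) : n → ℂ) = ∑ j, x j • ((b j : n → ℂ)) by
      push_cast; rfl]
    simp [hBdef, Matrix.mulVec, dotProduct, mul_comm, Finset.sum_apply]
  refine ⟨k, B, ?_, ?_⟩
  · intro x hx
    rw [hvec] at hx
    have hz : (∑ j, x j • b j : G) = 0 := by
      apply Subtype.ext
      simpa using hx
    have hli := b.linearIndependent
    rw [Fintype.linearIndependent_iff] at hli
    funext j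
    exact hli x hz j
  · apply le_antisymm
    · rintro _ ⟨x, rfl⟩
      rw [Matrix.mulVecLin_apply, hvec]
      exact Submodule.coe_mem _
    · intro g hg
      refine ⟨b.repr ⟨g, hg⟩, ?_⟩
      rw [Matrix.mulVecLin_apply, hvec, b.sum_repr ⟨g, hg⟩]

end BasisMatrix

end Aux11

namespace Aux11
set_option linter.unusedSectionVars false
variable {n m p d : Type*} [Fintype n] [Fintype m] [Fintype p] [Fintype d]
  [DecidableEq n] [DecidableEq d]

lemma quad_form_eq (B : Matrix m d ℂ) (x : d → ℂ) :
    star x ⬝ᵥ ((Bᴴ * B) *ᵥ x) = star (B *ᵥ x) ⬝ᵥ (B *ᵥ x) := by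
  rw [← Matrix.mulVec_mulVec, Matrix.dotProduct_mulVec, Matrix.star_mulVec]

lemma tstar_formula {r : ℕ} (A : Fin r → Matrix n n ℂ)
    (T Tstar : Matrix n n ℂ → Matrix n n ℂ)
    (hT : ∀ X, T X = ∑ i, A i * X * (A i)ᴴ)
    (hadj : ∀ X Y, (T X * Yᴴ).trace = (X * (Tstar Y)ᴴ).trace) (Y : Matrix n n ℂ) :
    Tstar Y = ∑ i, (A i)ᴴ * Y * A i := by
  set D := ∑ i, (A i)ᴴ * Y * A i with hD
  have key : ∀ X, (X * (Tstar Y)ᴴ).trace = (X * Dᴴ).trace := by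
    intro X
    rw [← hadj, hT]
    have hDH : Dᴴ = ∑ i, (A i)ᴴ * Yᴴ * A i := by
      rw [hD, Matrix.conjTranspose_sum]
      refine Finset.sum_congr rfl fun i _ => ?_
      simp only [Matrix.conjTranspose_mul, Matrix.conjTranspose_conjTranspose, Matrix.mul_assoc]
    rw [hDH, Finset.sum_mul, Matrix.trace_sum, Finset.mul_sum, Matrix.trace_sum]
    refine Finset.sum_congr rfl fun i _ => ?_
    calc (A i * X * (A i)ᴴ * Yᴴ).trace
        = ((A i) * (X * ((A i)ᴴ * Yᴴ))).trace := by simp only [Matrix.mul_assoc]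
      _ = ((X * ((A i)ᴴ * Yᴴ)) * A i).trace := Matrix.trace_mul_comm _ _
      _ = (X * ((A i)ᴴ * Yᴴ * A i)).trace := by simp only [Matrix.mul_assoc]
  have h0 : ((Tstar Y - D) * (Tstar Y - D)ᴴ).trace = 0 := by
    have h1 := key (Tstar Y - D)
    have h2 : ∀ Z : Matrix n n ℂ, (Tstar Y - D) * Zᴴ = ((Tstar Y - D) * (Tstar Y)ᴴ)
        - ((Tstar Y - D) * Dᴴ) + ((Tstar Y - D) * Zᴴ) - ((Tstar Y - D) * (Tstar Y)ᴴ)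
        + ((Tstar Y - D) * Dᴴ) := by intro Z; abel
    rw [Matrix.conjTranspose_sub, Matrix.mul_sub, Matrix.trace_sub, h1, sub_self]
  have := eq_zero_of_trace_mul_conjTranspose h0
  rw [sub_eq_zero] at this
  exact this

section Stacked

variable {s t : ℕ}

/-- The `k × s` block matrix `[Id_{s×s}; S]` (local copy of `stacked`). -/
def stacked' (S : Matrix (Fin t) (Fin s) ℂ) : Matrix (Fin s ⊕ Fin t) (Fin s) ℂ :=
  Matrix.fromRows 1 S

/-- The `k × t` block matrix `[-Sᴴ; Id]` whose columns span the orthocomplement. -/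
def uMat (S : Matrix (Fin t) (Fin s) ℂ) : Matrix (Fin s ⊕ Fin t) (Fin t) ℂ :=
  Matrix.fromRows (-Sᴴ) 1

variable (S : Matrix (Fin t) (Fin s) ℂ)

lemma stacked'_conjTranspose : (stacked' S)ᴴ = Matrix.fromCols 1 Sᴴ := by
  rw [stacked', Matrix.conjTranspose_fromRows_eq_fromCols_conjTranspose,
    Matrix.conjTranspose_one]

lemma uMat_conjTranspose : (uMat S)ᴴ = Matrix.fromCols (-S) 1 := by
  rw [uMat, Matrix.conjTranspose_fromRows_eq_fromCols_conjTranspose,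
    Matrix.conjTranspose_neg, Matrix.conjTranspose_conjTranspose, Matrix.conjTranspose_one]

lemma stacked'_hermMul : (stacked' S)ᴴ * stacked' S = 1 + Sᴴ * S := by
  rw [stacked'_conjTranspose, stacked', Matrix.fromCols_mul_fromRows]
  simp

lemma uMat_hermMul : (uMat S)ᴴ * uMat S = S * Sᴴ + 1 := by
  rw [uMat_conjTranspose, uMat, Matrix.fromCols_mul_fromRows]
  simp [Matrix.neg_mul, Matrix.mul_neg]

lemma stacked'_herm_mul_uMat : (stacked' S)ᴴ * uMat S = 0 := by
  rw [stacked'_conjTranspose, uMat, Matrix.fromCols_mul_fromRows]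
  simp

lemma uMat_herm_mul_stacked' : (uMat S)ᴴ * stacked' S = 0 := by
  rw [uMat_conjTranspose, stacked', Matrix.fromCols_mul_fromRows]
  simp [Matrix.neg_mul]

lemma stacked'_posDef : ((stacked' S)ᴴ * stacked' S).PosDef := by
  rw [stacked'_hermMul]
  exact Matrix.PosDef.add_posSemidef Matrix.PosDef.one
    (Matrix.posSemidef_conjTranspose_mul_self S)

lemma uMat_posDef : ((uMat S)ᴴ * uMat S).PosDef := by
  rw [uMat_hermMul]
  exact Matrix.PosDef.posSemidef_add (Matrix.posSemidef_self_mul_conjTranspose S)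
    Matrix.PosDef.one

lemma stacked'_mul_herm : stacked' S * (stacked' S)ᴴ = Matrix.fromBlocks 1 Sᴴ S (S * Sᴴ) := by
  rw [stacked'_conjTranspose, stacked', Matrix.fromRows_mul_fromCols]
  simp

lemma uMat_mul_herm : uMat S * (uMat S)ᴴ = Matrix.fromBlocks (Sᴴ * S) (-Sᴴ) (-S) 1 := by
  rw [uMat_conjTranspose, uMat, Matrix.fromRows_mul_fromCols]
  simp [Matrix.neg_mul, Matrix.mul_neg]

end Stacked

end Aux11

namespace Aux11
set_option linter.unusedSectionVars false

section MoreProj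
variable {n d : Type*} [Fintype n] [Fintype d] [DecidableEq n] [DecidableEq d]

lemma herm_mul_projOf {B : Matrix n d ℂ} (hB : (Bᴴ * B).PosDef) :
    Bᴴ * projOf B = Bᴴ := by
  calc Bᴴ * projOf B = ((Bᴴ * B) * (Bᴴ * B)⁻¹) * Bᴴ := by simp only [projOf, Matrix.mul_assoc]
    _ = Bᴴ := by
        rw [Matrix.mul_nonsing_inv _ ((Matrix.isUnit_iff_isUnit_det _).mp hB.isUnit),
          Matrix.one_mul]

lemma posDef_ker {M : Matrix n n ℂ} (hM : M.PosDef) {x : n → ℂ} (hx : M *ᵥ x = 0) : x = 0 := by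
  by_contra hne
  have := hM.dotProduct_mulVec_pos hne
  rw [hx, dotProduct_zero] at this
  exact lt_irrefl _ this

lemma inj_of_ker {B : Matrix n d ℂ} (h : ∀ x, B *ᵥ x = 0 → x = 0) :
    Function.Injective B.mulVecLin := by
  intro x y hxy
  have h0 : B *ᵥ (x - y) = 0 := by
    rw [Matrix.mulVec_sub, sub_eq_zero]
    exact hxy
  exact sub_eq_zero.mp (h _ h0)

lemma quad_orthProj {R : Matrix n n ℂ} (hR : IsOrthProj R) (y : n → ℂ) :
    star y ⬝ᵥ (R *ᵥ y) = star (R *ᵥ y) ⬝ᵥ (R *ᵥ y) := by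
  have hRR : R = Rᴴ * R := by rw [hR.1]; exact hR.2.symm
  conv_lhs => rw [hRR]
  exact quad_form_eq R y

end MoreProj

section StackedMore
variable {s t : ℕ} (S : Matrix (Fin t) (Fin s) ℂ)

lemma herm_eq_zero (x : (Fin s ⊕ Fin t) → ℂ)
    (h1 : (stacked' S)ᴴ *ᵥ x = 0) (h2 : (uMat S)ᴴ *ᵥ x = 0) : x = 0 := by
  set x1 : Fin s → ℂ := fun a => x (Sum.inl a) with hx1
  set x2 : Fin t → ℂ := fun b => x (Sum.inr b) with hx2
  have hx : x = Sum.elim x1 x2 := by funext i; cases i <;> rfl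
  rw [hx, stacked'_conjTranspose, Matrix.fromCols_mulVec_sumElim, Matrix.one_mulVec] at h1
  rw [hx, uMat_conjTranspose, Matrix.fromCols_mulVec_sumElim, Matrix.one_mulVec,
    Matrix.neg_mulVec] at h2
  have hx2e : x2 = S *ᵥ x1 := by
    have := h2
    rw [neg_add_eq_zero] at this
    exact this.symm
  have h4 : ((1 : Matrix (Fin s) (Fin s) ℂ) + Sᴴ * S) *ᵥ x1 = 0 := by
    rw [Matrix.add_mulVec, Matrix.one_mulVec, ← Matrix.mulVec_mulVec, ← hx2e]
    exact h1
  have hpd : ((1 : Matrix (Fin s) (Fin s) ℂ) + Sᴴ * S).PosDef := by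
    rw [← stacked'_hermMul]; exact stacked'_posDef S
  have h5 : x1 = 0 := posDef_ker hpd h4
  have h6 : x2 = 0 := by rw [hx2e, h5, Matrix.mulVec_zero]
  rw [hx, h5, h6]
  funext i; cases i <;> rfl

lemma compl_projOf : (1 : Matrix (Fin s ⊕ Fin t) (Fin s ⊕ Fin t) ℂ) - projOf (stacked' S)
    = projOf (uMat S) := by
  set M := stacked' S
  set u := uMat S
  have hMpd := stacked'_posDef S
  have hupd := uMat_posDef S
  set P := projOf M with hPdef
  set Q := projOf u with hQdef
  have hP := projOf_isOrthProj hMpd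
  have hQ := projOf_isOrthProj hupd
  have hPQ : P * Q = 0 := by
    calc P * Q = M * ((Mᴴ * M)⁻¹ * (((Mᴴ * u) * (uᴴ * u)⁻¹) * uᴴ)) := by
          simp only [hPdef, hQdef, projOf, Matrix.mul_assoc]
      _ = 0 := by rw [stacked'_herm_mul_uMat]; simp
  have hQP : Q * P = 0 := by
    calc Q * P = u * ((uᴴ * u)⁻¹ * (((uᴴ * M) * (Mᴴ * M)⁻¹) * Mᴴ)) := by
          simp only [hPdef, hQdef, projOf, Matrix.mul_assoc]
      _ = 0 := by rw [uMat_herm_mul_stacked']; simp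
  set Φ := P + Q with hΦdef
  have hΦ2 : Φ * Φ = Φ := by
    rw [hΦdef, Matrix.add_mul, Matrix.mul_add, Matrix.mul_add, hP.2, hQ.2, hPQ, hQP]
    abel
  have hΦinj : ∀ x, Φ *ᵥ x = 0 → x = 0 := by
    intro x hx
    have hsplit : P *ᵥ x + Q *ᵥ x = 0 := by
      rw [← Matrix.add_mulVec]; exact hx
    have hdot : star x ⬝ᵥ (P *ᵥ x) + star x ⬝ᵥ (Q *ᵥ x) = 0 := by
      rw [← dotProduct_add, hsplit, dotProduct_zero]
    have hP0 : star (P *ᵥ x) ⬝ᵥ (P *ᵥ x) = 0 ∧ star (Q *ᵥ x) ⬝ᵥ (Q *ᵥ x) = 0 := by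
      rw [quad_orthProj hP, quad_orthProj hQ] at hdot
      constructor
      · exact (add_eq_zero_iff_of_nonneg (dotProduct_star_self_nonneg _)
          (dotProduct_star_self_nonneg _)).mp hdot |>.1
      · exact (add_eq_zero_iff_of_nonneg (dotProduct_star_self_nonneg _)
          (dotProduct_star_self_nonneg _)).mp hdot |>.2
    have hPx : P *ᵥ x = 0 := dotProduct_star_self_eq_zero.mp hP0.1
    have hQx : Q *ᵥ x = 0 := dotProduct_star_self_eq_zero.mp hP0.2
    have hMx : Mᴴ *ᵥ x = 0 := by
      have : (Mᴴ * P) *ᵥ x = Mᴴ *ᵥ (P *ᵥ x) := (Matrix.mulVec_mulVec _ _ _).symm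
      rw [herm_mul_projOf hMpd] at this
      rw [this, hPx, Matrix.mulVec_zero]
    have hux : uᴴ *ᵥ x = 0 := by
      have : (uᴴ * Q) *ᵥ x = uᴴ *ᵥ (Q *ᵥ x) := (Matrix.mulVec_mulVec _ _ _).symm
      rw [herm_mul_projOf hupd] at this
      rw [this, hQx, Matrix.mulVec_zero]
    exact herm_eq_zero S x hMx hux
  have hΦ1 : Φ = 1 := by
    apply ext_mulVec
    intro x
    rw [Matrix.one_mulVec]
    have h0 : Φ *ᵥ (Φ *ᵥ x - x) = 0 := by
      rw [Matrix.mulVec_sub, Matrix.mulVec_mulVec, hΦ2, sub_self]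
    have := hΦinj _ h0
    rwa [sub_eq_zero] at this
  rw [← hΦ1, hΦdef]
  abel

lemma V_eq_projOf : (Matrix.fromBlocks 1 0 0 0 : Matrix (Fin s ⊕ Fin t) (Fin s ⊕ Fin t) ℂ)
    = projOf (stacked' (0 : Matrix (Fin t) (Fin s) ℂ)) := by
  rw [projOf, stacked'_hermMul]
  simp only [Matrix.conjTranspose_zero, Matrix.mul_zero, Matrix.zero_mul, add_zero,
    inv_one, Matrix.mul_one]
  rw [stacked'_mul_herm]
  simp

lemma finrank_range_stacked' :
    Module.finrank ℂ (LinearMap.range (stacked' S).mulVecLin) = s := by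
  rw [LinearMap.finrank_range_of_inj
    (inj_of_ker (fun x => mulVec_injective_of_posDef (stacked'_posDef S) x))]
  simp [Module.finrank_pi]

lemma rank_projOf_stacked' : (projOf (stacked' S)).rank = s := by
  rw [Matrix.rank, range_projOf (stacked'_posDef S), finrank_range_stacked']

end StackedMore

end Aux11

namespace Aux11
set_option linter.unusedSectionVars false

section Aux5a
variable {m p n d : Type*} [Fintype m] [Fintype p] [Fintype n] [Fintype d]
  [DecidableEq n] [DecidableEq d]

lemma eq_zero_of_sum_trace {r : ℕ} (C : Fin r → Matrix m p ℂ)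
    (h : ∑ i, ((C i) * (C i)ᴴ).trace = 0) (i : Fin r) : C i = 0 :=
  eq_zero_of_trace_mul_conjTranspose
    ((Finset.sum_eq_zero_iff_of_nonneg
      (fun j _ => trace_mul_conjTranspose_nonneg (C j))).mp h i (Finset.mem_univ i))

lemma posDef_herm_of_inj {B : Matrix n d ℂ} (h : ∀ x, B *ᵥ x = 0 → x = 0) :
    (Bᴴ * B).PosDef := by
  refine Matrix.PosDef.of_dotProduct_mulVec_pos (Matrix.isHermitian_conjTranspose_mul_self B) fun x hx => ?_
  rw [quad_form_eq]
  exact dotProduct_star_self_pos_iff.mpr (fun h0 => hx (h x h0))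

end Aux5a

section Aux5b
variable {s t : ℕ} (S : Matrix (Fin t) (Fin s) ℂ)

lemma projOf_mul_uMat : projOf (stacked' S) * uMat S = 0 := by
  calc projOf (stacked' S) * uMat S
      = stacked' S * (((stacked' S)ᴴ * stacked' S)⁻¹ * ((stacked' S)ᴴ * uMat S)) := by
        simp only [projOf, Matrix.mul_assoc]
    _ = 0 := by rw [stacked'_herm_mul_uMat]; simp

variable {r : ℕ} (A : Fin r → Matrix (Fin s ⊕ Fin t) (Fin s ⊕ Fin t) ℂ)

lemma krausW_of_C (hC : ∀ i, (stacked' S)ᴴ * A i * uMat S = 0) (i : Fin r) :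
    projOf (stacked' S) * ((A i)ᴴ * projOf (stacked' S)) = (A i)ᴴ * projOf (stacked' S) := by
  set W := projOf (stacked' S) with hWdef
  have hWH : Wᴴ = W := (projOf_isOrthProj (stacked'_posDef S)).1
  have h1 : W * A i * projOf (uMat S) = 0 := by
    calc W * A i * projOf (uMat S)
        = stacked' S * (((stacked' S)ᴴ * stacked' S)⁻¹ *
            (((stacked' S)ᴴ * A i * uMat S) * (((uMat S)ᴴ * uMat S)⁻¹ * (uMat S)ᴴ))) := by
          simp only [hWdef, projOf, Matrix.mul_assoc]
      _ = 0 := by rw [hC i]; simp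
  have h2 : W * A i * ((1 : Matrix (Fin s ⊕ Fin t) (Fin s ⊕ Fin t) ℂ) - W) = 0 := by
    rw [hWdef, compl_projOf]
    exact h1
  have h3 := congrArg Matrix.conjTranspose h2
  simp only [Matrix.conjTranspose_mul, Matrix.conjTranspose_sub, Matrix.conjTranspose_one,
    Matrix.conjTranspose_zero, hWH] at h3
  rw [Matrix.sub_mul, Matrix.one_mul, sub_eq_zero] at h3
  exact h3.symm

lemma C_of_krausW
    (hK : ∀ i, projOf (stacked' S) * ((A i)ᴴ * projOf (stacked' S)) =
      (A i)ᴴ * projOf (stacked' S)) (i : Fin r) :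
    (stacked' S)ᴴ * A i * uMat S = 0 := by
  set W := projOf (stacked' S) with hWdef
  have hWH : Wᴴ = W := (projOf_isOrthProj (stacked'_posDef S)).1
  have hWAW : W * A i * W = W * A i := by
    have := congrArg Matrix.conjTranspose (hK i)
    simpa only [Matrix.conjTranspose_mul, Matrix.conjTranspose_conjTranspose, hWH,
      Matrix.mul_assoc] using this
  have hWu : W * uMat S = 0 := projOf_mul_uMat S
  calc (stacked' S)ᴴ * A i * uMat S
      = ((stacked' S)ᴴ * W) * A i * uMat S := by
        rw [herm_mul_projOf (stacked'_posDef S)]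
    _ = (stacked' S)ᴴ * (W * A i) * uMat S := by simp only [Matrix.mul_assoc]
    _ = (stacked' S)ᴴ * (W * A i * W) * uMat S := by rw [hWAW]
    _ = ((stacked' S)ᴴ * (W * A i)) * (W * uMat S) := by simp only [Matrix.mul_assoc]
    _ = 0 := by rw [hWu, Matrix.mul_zero]

lemma ker_inf_rangeV :
    LinearMap.ker (projOf (stacked' S)).mulVecLin ⊓
      LinearMap.range (Matrix.fromBlocks 1 0 0 0 :
        Matrix (Fin s ⊕ Fin t) (Fin s ⊕ Fin t) ℂ).mulVecLin = ⊥ := by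
  rw [Submodule.eq_bot_iff]
  intro x hx
  obtain ⟨hk, hr⟩ := Submodule.mem_inf.mp hx
  have hWx : projOf (stacked' S) *ᵥ x = 0 := by
    have := LinearMap.mem_ker.mp hk
    rwa [Matrix.mulVecLin_apply] at this
  rw [V_eq_projOf, range_projOf (stacked'_posDef 0)] at hr
  obtain ⟨y, hy⟩ := hr
  rw [Matrix.mulVecLin_apply] at hy
  have hMone : (stacked' S)ᴴ * stacked' (0 : Matrix (Fin t) (Fin s) ℂ) = 1 := by
    rw [stacked'_conjTranspose, stacked', Matrix.fromCols_mul_fromRows]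
    simp
  have hy0 : y = 0 := by
    have h1 : (stacked' S)ᴴ *ᵥ x = y := by
      rw [← hy, Matrix.mulVec_mulVec, hMone, Matrix.one_mulVec]
    have h2 : (stacked' S)ᴴ *ᵥ (projOf (stacked' S) *ᵥ x) = (stacked' S)ᴴ *ᵥ x := by
      rw [Matrix.mulVec_mulVec, herm_mul_projOf (stacked'_posDef S)]
    rw [← h1, ← h2, hWx, Matrix.mulVec_zero]
  rw [← hy, hy0, Matrix.mulVec_zero]

end Aux5b

end Aux11


namespace Aux11
set_option linter.unusedSectionVars false

lemma stacked_eq {s t : ℕ} (S : Matrix (Fin t) (Fin s) ℂ) : stacked S = stacked' S := by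
  ext i j
  cases i <;> simp [stacked, stacked', Matrix.fromRows_apply_inl, Matrix.fromRows_apply_inr, Matrix.one_apply]

lemma fFun_eq {s t r : ℕ} (A : Fin r → Matrix (Fin s ⊕ Fin t) (Fin s ⊕ Fin t) ℂ)
    (T1star : Matrix (Fin s ⊕ Fin t) (Fin s ⊕ Fin t) ℂ →
      Matrix (Fin s ⊕ Fin t) (Fin s ⊕ Fin t) ℂ)
    (hstar : ∀ Y, T1star Y = ∑ i, (A i)ᴴ * Y * A i) (S : Matrix (Fin t) (Fin s) ℂ) :
    fFun T1star S =
      ∑ i, ((((stacked' S)ᴴ * A i * uMat S)) * (((stacked' S)ᴴ * A i * uMat S))ᴴ).trace := by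
  unfold fFun
  rw [← stacked'_mul_herm, ← uMat_mul_herm, hstar, Finset.sum_mul, Matrix.trace_sum]
  refine Finset.sum_congr rfl fun i _ => ?_
  have hCT : (((stacked' S)ᴴ * A i * uMat S))ᴴ = (uMat S)ᴴ * ((A i)ᴴ * stacked' S) := by
    simp [Matrix.conjTranspose_mul, Matrix.mul_assoc]
  rw [hCT]
  calc ((A i)ᴴ * (stacked' S * (stacked' S)ᴴ) * A i * (uMat S * (uMat S)ᴴ)).trace
      = (((A i)ᴴ * stacked' S) * ((stacked' S)ᴴ * (A i * (uMat S * (uMat S)ᴴ)))).trace := by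
        simp only [Matrix.mul_assoc]
    _ = (((stacked' S)ᴴ * (A i * (uMat S * (uMat S)ᴴ))) * ((A i)ᴴ * stacked' S)).trace :=
        Matrix.trace_mul_comm _ _
    _ = (((stacked' S)ᴴ * A i * uMat S) * ((uMat S)ᴴ * ((A i)ᴴ * stacked' S))).trace := by
        simp only [Matrix.mul_assoc]

end Aux11


/-- Lemma 11: for a completely positive `T₁` with `T₁`-invariant irreducible
corner `V₁ = [[Id, 0],[0, 0]]` and `V₁ T₁^*(V₁) V₁ = V₁`, `W` solves Problem 1 for
`(T₁, V₁)` iff `W` is the orthogonal projection onto the column space of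
`[Id; S]` for some zero `S` of `f`. -/
theorem stmt9 {s t : ℕ}
    (T1 T1star : Matrix (Fin s ⊕ Fin t) (Fin s ⊕ Fin t) ℂ →
      Matrix (Fin s ⊕ Fin t) (Fin s ⊕ Fin t) ℂ)
    (hCP : IsCPMap T1)
    (hadj : ∀ X Y : Matrix (Fin s ⊕ Fin t) (Fin s ⊕ Fin t) ℂ,
      (T1 X * Yᴴ).trace = (X * (T1star Y)ᴴ).trace)
    (hinv : LeavesInv T1 (Matrix.fromBlocks 1 0 0 0))
    (hirr : IsIrredOn T1 (Matrix.fromBlocks 1 0 0 0))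
    (hfix : (Matrix.fromBlocks 1 0 0 0 : Matrix (Fin s ⊕ Fin t) (Fin s ⊕ Fin t) ℂ) *
        T1star (Matrix.fromBlocks 1 0 0 0) * Matrix.fromBlocks 1 0 0 0 =
        Matrix.fromBlocks 1 0 0 0)
    (W : Matrix (Fin s ⊕ Fin t) (Fin s ⊕ Fin t) ℂ) :
    IsSolutionW T1star (Matrix.fromBlocks 1 0 0 0) W ↔
      IsOrthProj W ∧ ∃ S : Matrix (Fin t) (Fin s) ℂ, fFun T1star S = 0 ∧
        LinearMap.range W.mulVecLin = LinearMap.range (stacked S).mulVecLin := by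
  classical
  obtain ⟨r, A, hA⟩ := hCP
  have hstar : ∀ Y, T1star Y = ∑ i, (A i)ᴴ * Y * A i := Aux11.tstar_formula A T1 T1star hA hadj
  have hstar' : ∀ X, T1star X = ∑ i, (A i)ᴴ * X * ((A i)ᴴ)ᴴ := by
    intro X
    rw [hstar X]
    simp [Matrix.conjTranspose_conjTranspose]
  set V : Matrix (Fin s ⊕ Fin t) (Fin s ⊕ Fin t) ℂ := Matrix.fromBlocks 1 0 0 0 with hV
  have hVproj : V = Aux11.projOf (Aux11.stacked' (0 : Matrix (Fin t) (Fin s) ℂ)) :=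
    Aux11.V_eq_projOf
  have hVorth : IsOrthProj V := by
    rw [hVproj]; exact Aux11.projOf_isOrthProj (Aux11.stacked'_posDef 0)
  have hAV : ∀ i, V * (A i * V) = A i * V :=
    Aux11.kraus_of_leavesInv A hA hVorth hinv
  have hrankV : V.rank = s := by rw [hVproj]; exact Aux11.rank_projOf_stacked' 0
  have hfinV : Module.finrank ℂ (LinearMap.range V.mulVecLin) = s := hrankV
  have hfintot : Module.finrank ℂ ((Fin s ⊕ Fin t) → ℂ) = s + t := by
    simp [Module.finrank_pi]
  constructor
  · rintro ⟨hWorth, hLI, _hIrr, hrank, hker⟩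
    refine ⟨hWorth, ?_⟩
    have hWH : Wᴴ = W := hWorth.1
    have hfinW : Module.finrank ℂ (LinearMap.range W.mulVecLin) = s := by
      have h : W.rank = s := by rw [hrank, hrankV]
      exact h
    have hfinkerW : Module.finrank ℂ (LinearMap.ker W.mulVecLin) = t := by
      have h1 := LinearMap.finrank_range_add_finrank_ker W.mulVecLin
      rw [hfinW, hfintot] at h1
      omega
    have hsup : LinearMap.ker W.mulVecLin ⊔ LinearMap.range V.mulVecLin = ⊤ := by
      apply Submodule.eq_top_of_finrank_eq
      have h2 := Submodule.finrank_sup_add_finrank_inf_eq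
        (LinearMap.ker W.mulVecLin) (LinearMap.range V.mulVecLin)
      rw [hker, finrank_bot, add_zero, hfinkerW, hfinV] at h2
      rw [h2, hfintot]
      omega
    have hIm0 : ∀ x ∈ LinearMap.range W.mulVecLin, (∀ a, x (Sum.inl a) = 0) → x = 0 := by
      intro x hx hx0
      have hxW : W *ᵥ x = x := Aux11.fix_of_mem_range hWorth hx
      have hxk : ∀ u₀ ∈ LinearMap.ker W.mulVecLin, star x ⬝ᵥ u₀ = 0 := by
        intro u₀ hu₀
        have hWu : W *ᵥ u₀ = 0 := LinearMap.mem_ker.mp hu₀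
        calc star x ⬝ᵥ u₀ = star (W *ᵥ x) ⬝ᵥ u₀ := by rw [hxW]
          _ = (star x ᵥ* W) ⬝ᵥ u₀ := by rw [Matrix.star_mulVec, hWH]
          _ = star x ⬝ᵥ (W *ᵥ u₀) := (Matrix.dotProduct_mulVec _ _ _).symm
          _ = 0 := by rw [hWu, dotProduct_zero]
      have hxv : ∀ v₀ ∈ LinearMap.range V.mulVecLin, star x ⬝ᵥ v₀ = 0 := by
        rintro v₀ ⟨z, rfl⟩
        have hv0 : ∀ b, (V.mulVecLin z) (Sum.inr b) = 0 := by
          intro b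
          rw [Matrix.mulVecLin_apply, hV, Matrix.fromBlocks_mulVec]
          simp
        have hexp : star x ⬝ᵥ (V.mulVecLin z) =
            (∑ a, star (x (Sum.inl a)) * (V.mulVecLin z) (Sum.inl a)) +
            (∑ b, star (x (Sum.inr b)) * (V.mulVecLin z) (Sum.inr b)) := by
          simp [dotProduct, Fintype.sum_sum_type]
        rw [hexp]
        rw [Finset.sum_eq_zero (fun a _ => by rw [hx0 a, star_zero, zero_mul]),
          Finset.sum_eq_zero (fun b _ => by rw [hv0 b, mul_zero]), add_zero]
      have hmem : x ∈ (⊤ : Submodule ℂ ((Fin s ⊕ Fin t) → ℂ)) := Submodule.mem_top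
      rw [← hsup] at hmem
      obtain ⟨u₀, hu₀, v₀, hv₀, hsum⟩ := Submodule.mem_sup.mp hmem
      have hzero : star x ⬝ᵥ x = 0 := by
        have h5 : star x ⬝ᵥ (u₀ + v₀) = 0 := by
          rw [dotProduct_add, hxk u₀ hu₀, hxv v₀ hv₀, add_zero]
        rwa [hsum] at h5
      exact dotProduct_star_self_eq_zero.mp hzero
    let π : LinearMap.range W.mulVecLin →ₗ[ℂ] (Fin s → ℂ) :=
      (LinearMap.funLeft ℂ ℂ Sum.inl).comp (LinearMap.range W.mulVecLin).subtype
    have hπinj : Function.Injective π := by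
      intro a b hab
      apply Subtype.ext
      have hdiff : ((a : (Fin s ⊕ Fin t) → ℂ) - b) ∈ LinearMap.range W.mulVecLin :=
        sub_mem a.2 b.2
      have h0 : ∀ c, ((a : (Fin s ⊕ Fin t) → ℂ) - b) (Sum.inl c) = 0 := by
        intro c
        have h1 : (a : (Fin s ⊕ Fin t) → ℂ) (Sum.inl c) =
            (b : (Fin s ⊕ Fin t) → ℂ) (Sum.inl c) := congrFun hab c
        show (a : (Fin s ⊕ Fin t) → ℂ) (Sum.inl c) - (b : (Fin s ⊕ Fin t) → ℂ) (Sum.inl c) = 0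
        rw [h1, sub_self]
      have := hIm0 _ hdiff h0
      rwa [sub_eq_zero] at this
    have hπsurj : Function.Surjective π := by
      have hr : LinearMap.range π = ⊤ := by
        apply Submodule.eq_top_of_finrank_eq
        rw [LinearMap.finrank_range_of_inj hπinj, hfinW]
        simp [Module.finrank_pi]
      exact LinearMap.range_eq_top.mp hr
    let e : LinearMap.range W.mulVecLin ≃ₗ[ℂ] (Fin s → ℂ) :=
      LinearEquiv.ofBijective π ⟨hπinj, hπsurj⟩
    let σ : (Fin s → ℂ) →ₗ[ℂ] (Fin t → ℂ) :=
      ((LinearMap.funLeft ℂ ℂ Sum.inr).comp (LinearMap.range W.mulVecLin).subtype).comp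
        (e.symm : (Fin s → ℂ) →ₗ[ℂ] LinearMap.range W.mulVecLin)
    set S := LinearMap.toMatrix' σ with hSdef
    have hSmul : ∀ y, S *ᵥ y = σ y := by
      intro y
      rw [← Matrix.mulVecLin_apply, ← Matrix.toLin'_apply', hSdef, Matrix.toLin'_toMatrix']
    have hkey : ∀ y : Fin s → ℂ,
        ((e.symm y : LinearMap.range W.mulVecLin) : (Fin s ⊕ Fin t) → ℂ) = stacked S *ᵥ y := by
      intro y
      have hee : π (e.symm y) = y := e.apply_symm_apply y
      funext i
      rcases i with a | b
      · have h1 : ((e.symm y : LinearMap.range W.mulVecLin) : (Fin s ⊕ Fin t) → ℂ) (Sum.inl a)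
            = y a := congrFun hee a
        have h2 : (stacked S *ᵥ y) (Sum.inl a) = y a := by
          simp [stacked, Matrix.mulVec, dotProduct]
        rw [h1, h2]
      · have h1 : ((e.symm y : LinearMap.range W.mulVecLin) : (Fin s ⊕ Fin t) → ℂ) (Sum.inr b)
            = σ y b := rfl
        have h2 : (stacked S *ᵥ y) (Sum.inr b) = (S *ᵥ y) b := by
          simp [stacked, Matrix.mulVec, dotProduct]
        rw [h1, h2, hSmul]
    have hrangeW : LinearMap.range W.mulVecLin = LinearMap.range (stacked S).mulVecLin := by
      apply le_antisymm
      · intro x hx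
        refine ⟨e ⟨x, hx⟩, ?_⟩
        rw [Matrix.mulVecLin_apply, ← hkey, e.symm_apply_apply]
      · rintro _ ⟨y, rfl⟩
        rw [Matrix.mulVecLin_apply, ← hkey]
        exact (e.symm y).2
    have hstE : stacked S = Aux11.stacked' S := Aux11.stacked_eq S
    have hWproj : W = Aux11.projOf (Aux11.stacked' S) :=
      Aux11.orthProj_eq_of_range_eq hWorth (Aux11.projOf_isOrthProj (Aux11.stacked'_posDef S))
        (by rw [Aux11.range_projOf (Aux11.stacked'_posDef S), ← hstE]; exact hrangeW)
    have hK : ∀ i, W * ((A i)ᴴ * W) = (A i)ᴴ * W := by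
      intro i
      have := Aux11.kraus_of_leavesInv (fun j => (A j)ᴴ) hstar' hWorth hLI i
      simpa using this
    have hC : ∀ i, (Aux11.stacked' S)ᴴ * A i * Aux11.uMat S = 0 := by
      intro i
      apply Aux11.C_of_krausW S A
      intro j
      rw [← hWproj]
      exact hK j
    refine ⟨S, ?_, hrangeW⟩
    rw [Aux11.fFun_eq A T1star hstar S]
    apply Finset.sum_eq_zero
    intro i _
    rw [hC i]
    simp
  · rintro ⟨hWorth, S, hf, hrange⟩
    have hstE : stacked S = Aux11.stacked' S := Aux11.stacked_eq S
    rw [hstE] at hrange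
    have hMpd := Aux11.stacked'_posDef S
    have hWproj : W = Aux11.projOf (Aux11.stacked' S) :=
      Aux11.orthProj_eq_of_range_eq hWorth (Aux11.projOf_isOrthProj hMpd)
        (by rw [Aux11.range_projOf hMpd]; exact hrange)
    have hC : ∀ i, (Aux11.stacked' S)ᴴ * A i * Aux11.uMat S = 0 := by
      intro i
      refine Aux11.eq_zero_of_sum_trace
        (fun j => (Aux11.stacked' S)ᴴ * A j * Aux11.uMat S) ?_ i
      rw [← Aux11.fFun_eq A T1star hstar S]
      exact hf
    have hK : ∀ i, W * ((A i)ᴴ * W) = (A i)ᴴ * W := by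
      intro i
      rw [hWproj]
      exact Aux11.krausW_of_C S A hC i
    have hbotWV : LinearMap.ker W.mulVecLin ⊓ LinearMap.range V.mulVecLin = ⊥ := by
      rw [hWproj, hV]
      exact Aux11.ker_inf_rangeV S
    have hrankW : W.rank = s := by rw [hWproj]; exact Aux11.rank_projOf_stacked' S
    have hfinW : Module.finrank ℂ (LinearMap.range W.mulVecLin) = s := hrankW
    have hfinkerW : Module.finrank ℂ (LinearMap.ker W.mulVecLin) = t := by
      have h1 := LinearMap.finrank_range_add_finrank_ker W.mulVecLin
      rw [hfinW, hfintot] at h1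
      omega
    have hWH : Wᴴ = W := hWorth.1
    refine ⟨hWorth, ?_, ?_, ?_, ?_⟩
    · apply Aux11.leavesInv_of_kraus (fun j => (A j)ᴴ) hstar' hWorth
      intro i
      simpa using hK i
    · intro W' hW' hle hLI'
      have hW'H : W'ᴴ = W' := hW'.1
      have hK2' : ∀ i, W' * ((A i)ᴴ * W') = (A i)ᴴ * W' := by
        intro i
        have := Aux11.kraus_of_leavesInv (fun j => (A j)ᴴ) hstar' hW' hLI' i
        simpa using this
      have hK2 : ∀ i, W' * A i * W' = W' * A i := by
        intro i
        have := congrArg Matrix.conjTranspose (hK2' i)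
        simpa only [Matrix.conjTranspose_mul, Matrix.conjTranspose_conjTranspose, hW'H]
          using this
      have hkerinv : ∀ (i : Fin r) (x : (Fin s ⊕ Fin t) → ℂ),
          W' *ᵥ x = 0 → W' *ᵥ (A i *ᵥ x) = 0 := by
        intro i x hx
        calc W' *ᵥ (A i *ᵥ x) = (W' * A i) *ᵥ x := Matrix.mulVec_mulVec _ _ _
          _ = (W' * A i * W') *ᵥ x := by rw [hK2 i]
          _ = (W' * A i) *ᵥ (W' *ᵥ x) := by rw [← Matrix.mulVec_mulVec]
          _ = 0 := by rw [hx, Matrix.mulVec_zero]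
      set K := LinearMap.ker W'.mulVecLin with hKdef
      set G := K ⊓ LinearMap.range V.mulVecLin with hGdef
      obtain ⟨k', B, hBinj, hBrange⟩ := Aux11.exists_basis_matrix G
      have hBpd : (Bᴴ * B).PosDef := Aux11.posDef_herm_of_inj hBinj
      have hV''orth : IsOrthProj (Aux11.projOf B) := Aux11.projOf_isOrthProj hBpd
      have hV''range : LinearMap.range (Aux11.projOf B).mulVecLin = G := by
        rw [Aux11.range_projOf hBpd, hBrange]
      have hGinv : ∀ (i : Fin r), ∀ x ∈ G, A i *ᵥ x ∈ G := by
        intro i x hx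
        obtain ⟨hx1, hx2⟩ := Submodule.mem_inf.mp hx
        refine Submodule.mem_inf.mpr ⟨?_, ?_⟩
        · exact LinearMap.mem_ker.mpr (hkerinv i x (LinearMap.mem_ker.mp hx1))
        · obtain ⟨z, hz⟩ := hx2
          refine ⟨(A i * V) *ᵥ z, ?_⟩
          rw [Matrix.mulVecLin_apply]
          calc V *ᵥ ((A i * V) *ᵥ z) = (V * (A i * V)) *ᵥ z := Matrix.mulVec_mulVec _ _ _
            _ = (A i * V) *ᵥ z := by rw [hAV i]
            _ = A i *ᵥ (V *ᵥ z) := by rw [← Matrix.mulVec_mulVec]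
            _ = A i *ᵥ x := by rw [show V *ᵥ z = x from hz]
      have hV''K : ∀ i, Aux11.projOf B * (A i * Aux11.projOf B) = A i * Aux11.projOf B := by
        intro i
        apply Aux11.ext_mulVec
        intro x
        have hmemx : Aux11.projOf B *ᵥ x ∈ G := by
          rw [← hV''range]; exact ⟨x, rfl⟩
        have hmem : A i *ᵥ (Aux11.projOf B *ᵥ x) ∈ G := hGinv i _ hmemx
        calc (Aux11.projOf B * (A i * Aux11.projOf B)) *ᵥ x
            = Aux11.projOf B *ᵥ (A i *ᵥ (Aux11.projOf B *ᵥ x)) := by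
              rw [← Matrix.mulVec_mulVec, ← Matrix.mulVec_mulVec]
          _ = A i *ᵥ (Aux11.projOf B *ᵥ x) :=
              Aux11.fix_of_mem_range hV''orth (by rw [hV''range]; exact hmem)
          _ = (A i * Aux11.projOf B) *ᵥ x := by rw [← Matrix.mulVec_mulVec]
      have hLIV'' : LeavesInv T1 (Aux11.projOf B) :=
        Aux11.leavesInv_of_kraus A hA hV''orth hV''K
      have hcase := hirr (Aux11.projOf B) hV''orth
        (by rw [hV''range, hGdef]; exact inf_le_right) hLIV''
      have hWW' : W * W' = W' := Aux11.mul_eq_of_range_le hWorth hle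
      have hW'W : W' * W = W' := by
        have := congrArg Matrix.conjTranspose hWW'
        rwa [Matrix.conjTranspose_mul, hW'H, hWH] at this
      have hkerWK : LinearMap.ker W.mulVecLin ≤ K := by
        intro x hx
        have hx' : W *ᵥ x = 0 := LinearMap.mem_ker.mp hx
        refine LinearMap.mem_ker.mpr ?_
        show W' *ᵥ x = 0
        calc W' *ᵥ x = (W' * W) *ᵥ x := by rw [hW'W]
          _ = W' *ᵥ (W *ᵥ x) := by rw [← Matrix.mulVec_mulVec]
          _ = 0 := by rw [hx', Matrix.mulVec_zero]
      rcases hcase with hVV | hV0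
      · right
        have hGV : G = LinearMap.range V.mulVecLin := by rw [← hV''range, hVV]
        have hRVK : LinearMap.range V.mulVecLin ≤ K := by
          rw [← hGV, hGdef]
          exact inf_le_left
        have hKtop : K = ⊤ := by
          apply Submodule.eq_top_of_finrank_eq
          have hsup2 := Submodule.finrank_sup_add_finrank_inf_eq
            (LinearMap.ker W.mulVecLin) (LinearMap.range V.mulVecLin)
          rw [hbotWV, finrank_bot, add_zero, hfinkerW, hfinV] at hsup2
          have hle2 : LinearMap.ker W.mulVecLin ⊔ LinearMap.range V.mulVecLin ≤ K :=
            sup_le hkerWK hRVK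
          have h3 := Submodule.finrank_mono hle2
          have h4 := Submodule.finrank_le K
          rw [hfintot] at h4
          rw [hfintot]
          omega
        apply Aux11.ext_mulVec
        intro x
        rw [Matrix.zero_mulVec]
        have hxK : x ∈ K := by rw [hKtop]; trivial
        exact LinearMap.mem_ker.mp hxK
      · left
        have hGbot : G = ⊥ := by
          rw [← hV''range, hV0]
          simp [Matrix.mulVecLin_zero]
        have hfinK : Module.finrank ℂ K ≤ t := by
          have hsup2 := Submodule.finrank_sup_add_finrank_inf_eq K
            (LinearMap.range V.mulVecLin)
          rw [← hGdef, hGbot, finrank_bot, add_zero, hfinV] at hsup2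
          have h4 := Submodule.finrank_le (K ⊔ LinearMap.range V.mulVecLin)
          rw [hfintot] at h4
          omega
        have hKeq : K = LinearMap.ker W.mulVecLin := by
          refine (Submodule.eq_of_le_of_finrank_le hkerWK ?_).symm
          rw [hfinkerW]
          exact hfinK
        have hWW : W * W' = W := by
          apply Aux11.mul_eq_of_ker_le hW'
          intro x hx
          have hxK : x ∈ K := LinearMap.mem_ker.mpr hx
          rw [hKeq] at hxK
          exact LinearMap.mem_ker.mp hxK
        rw [← hWW', hWW]
    · rw [hWproj, hrankV]
      exact Aux11.rank_projOf_stacked' S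
    · exact hbotWV


end
end

section
/- Let T_1 : M_k(ℂ) → M_k(ℂ) be a completely positive map and let V_1 be the block-diagonal orthogonal projection with blocks Id_{s×s} and 0_{(k−s)×(k−s)}, such that T_1(V_1M_kV_1) ⊆ V_1M_kV_1 and V_1 T_1*(V_1) V_1 = V_1. If S ∈ M_{(k−s)×s}(ℂ) satisfies f(S) = 0, where f(X) = tr( T_1*([[Id, X*],[X, XX*]]) · [[X*X, −X*],[−X, Id]] ) (2×2 block matrices with blocks of sizes s and k−s), then the positive semidefinite matrix [[Id, S*],[S, SS*]] is a fixed point of T_1*: T_1*([[Id, S*],[S, SS*]]) = [[Id, S*],[S, SS*]]. -/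
open scoped Kronecker ComplexOrder
open Matrix

noncomputable section

lemma trace_CT_mul_self_zero {n : Type*} [Fintype n] {M : Matrix n n ℂ}
    (h : (Mᴴ * M).trace = 0) : M = 0 := by
  have h' : ∑ j, ∑ i, Complex.normSq (M i j) = 0 := by
    have : (Mᴴ * M).trace = ((∑ j, ∑ i, Complex.normSq (M i j) : ℝ) : ℂ) := by
      simp only [Matrix.trace, Matrix.mul_apply, Matrix.diag, Matrix.conjTranspose_apply]
      push_cast
      congr 1; ext j; congr 1; ext i
      exact (Complex.normSq_eq_conj_mul_self).symm
    rw [this] at h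
    exact_mod_cast h
  ext i j
  have := (Finset.sum_eq_zero_iff_of_nonneg (fun j _ => Finset.sum_nonneg
    (fun i _ => Complex.normSq_nonneg (M i j)))).mp h' j (Finset.mem_univ j)
  have := (Finset.sum_eq_zero_iff_of_nonneg (fun i _ => Complex.normSq_nonneg (M i j))).mp
    this i (Finset.mem_univ i)
  simpa using Complex.normSq_eq_zero.mp this

lemma eq_of_forall_trace {n : Type*} [Fintype n] {B C : Matrix n n ℂ}
    (h : ∀ X, (X * Bᴴ).trace = (X * Cᴴ).trace) : B = C := by
  have h0 : ((B - C)ᴴ * (B - C)).trace = 0 := by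
    have := h (B - C)
    rw [Matrix.trace_mul_comm]
    simp only [Matrix.conjTranspose_sub, Matrix.mul_sub, Matrix.sub_mul,
      Matrix.trace_sub] at this ⊢
    linear_combination this
  exact sub_eq_zero.mp (trace_CT_mul_self_zero h0)

/-- Part of the proof of Lemma 11, step (b) ⟹ (a): if `T₁` is completely positive,
leaves the corner of `V₁ = [[Id, 0],[0, 0]]` invariant, `V₁ T₁^*(V₁) V₁ = V₁`,
and `f(S) = 0`, then `[[Id, S^*],[S, SS^*]]` is a fixed point of `T₁^*`. -/
theorem stmt11 {s t : ℕ}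
    (T1 T1star : Matrix (Fin s ⊕ Fin t) (Fin s ⊕ Fin t) ℂ →
      Matrix (Fin s ⊕ Fin t) (Fin s ⊕ Fin t) ℂ)
    (hCP : IsCPMap T1)
    (hadj : ∀ X Y : Matrix (Fin s ⊕ Fin t) (Fin s ⊕ Fin t) ℂ,
      (T1 X * Yᴴ).trace = (X * (T1star Y)ᴴ).trace)
    (hinv : LeavesInv T1 (Matrix.fromBlocks 1 0 0 0))
    (hfix : (Matrix.fromBlocks 1 0 0 0 : Matrix (Fin s ⊕ Fin t) (Fin s ⊕ Fin t) ℂ) *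
        T1star (Matrix.fromBlocks 1 0 0 0) * Matrix.fromBlocks 1 0 0 0 =
        Matrix.fromBlocks 1 0 0 0)
    (S : Matrix (Fin t) (Fin s) ℂ) (hS : fFun T1star S = 0) :
    T1star (Matrix.fromBlocks 1 Sᴴ S (S * Sᴴ)) = Matrix.fromBlocks 1 Sᴴ S (S * Sᴴ) := by
  classical
  obtain ⟨r, K, hK⟩ := hCP
  set V : Matrix (Fin s ⊕ Fin t) (Fin s ⊕ Fin t) ℂ := Matrix.fromBlocks 1 0 0 0 with hVdef
  set P : Matrix (Fin s ⊕ Fin t) (Fin s ⊕ Fin t) ℂ := Matrix.fromBlocks 1 Sᴴ S (S * Sᴴ)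
    with hPdef
  set Q : Matrix (Fin s ⊕ Fin t) (Fin s ⊕ Fin t) ℂ := Matrix.fromBlocks (Sᴴ * S) (-Sᴴ) (-S) 1
    with hQdef
  set A : Matrix (Fin s ⊕ Fin t) (Fin s ⊕ Fin t) ℂ := T1star P with hAdef
  have hVH : Vᴴ = V := by
    rw [hVdef]
    simp [Matrix.fromBlocks_conjTranspose]
  -- P is positive semidefinite
  have hP : P.PosSemidef := by
    have h1 : P = (Matrix.fromCols (1 : Matrix (Fin s) (Fin s) ℂ) Sᴴ)ᴴ *
        Matrix.fromCols 1 Sᴴ := by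
      rw [Matrix.conjTranspose_fromCols_eq_fromRows_conjTranspose,
        Matrix.fromRows_mul_fromCols]
      simp [hPdef]
    rw [h1]
    exact Matrix.posSemidef_conjTranspose_mul_self _
  have hPH : Pᴴ = P := hP.1.eq
  -- Q is positive semidefinite
  have hQ : Q.PosSemidef := by
    have h1 : Q = (Matrix.fromCols (-S) (1 : Matrix (Fin t) (Fin t) ℂ))ᴴ *
        Matrix.fromCols (-S) 1 := by
      rw [Matrix.conjTranspose_fromCols_eq_fromRows_conjTranspose,
        Matrix.fromRows_mul_fromCols]
      simp [hQdef]
    rw [h1]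
    exact Matrix.posSemidef_conjTranspose_mul_self _
  -- the explicit Kraus form of `A = T1star P`
  have hAform : A = ∑ i, (K i)ᴴ * P * K i := by
    apply eq_of_forall_trace
    intro X
    rw [← hadj X P, hK X]
    rw [Matrix.conjTranspose_sum, Finset.mul_sum, Finset.sum_mul, Matrix.trace_sum,
      Matrix.trace_sum]
    refine Finset.sum_congr rfl fun i _ => ?_
    calc (K i * X * (K i)ᴴ * Pᴴ).trace
        = (K i * (X * ((K i)ᴴ * Pᴴ))).trace := by simp only [Matrix.mul_assoc]
      _ = ((X * ((K i)ᴴ * Pᴴ)) * K i).trace := Matrix.trace_mul_comm _ _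
      _ = (X * ((K i)ᴴ * P * K i)ᴴ).trace := by
            simp only [Matrix.conjTranspose_mul, Matrix.conjTranspose_conjTranspose,
              Matrix.mul_assoc]
  have hA : A.PosSemidef := by
    rw [hAform]
    refine Finset.sum_induction _ _ (fun a b ha hb => ha.add hb) Matrix.PosSemidef.zero
      (fun i _ => ?_)
    exact hP.conjTranspose_mul_mul_same (K i)
  have hAH : Aᴴ = A := hA.1.eq
  -- `A * Q = 0` from `f(S) = 0`
  have hAQ : A * Q = 0 := by
    have htr : (A * Q).trace = 0 := hS
    have hsq : ∀ M : Matrix (Fin s ⊕ Fin t) (Fin s ⊕ Fin t) ℂ, M.PosSemidef →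
        ∃ B : Matrix (Fin s ⊕ Fin t) (Fin s ⊕ Fin t) ℂ, M = Bᴴ * B := by
      open scoped MatrixOrder in
      intro M hM
      have h0 : 0 ≤ M := Matrix.nonneg_iff_posSemidef.mpr hM
      refine ⟨CFC.sqrt M, ?_⟩
      rw [show (CFC.sqrt M)ᴴ = CFC.sqrt M from
        (IsSelfAdjoint.of_nonneg (CFC.sqrt_nonneg M)).star_eq, CFC.sqrt_mul_sqrt_self M h0]
    obtain ⟨B, hB⟩ := hsq A hA
    obtain ⟨E, hE⟩ := hsq Q hQ
    have hBE : B * Eᴴ = 0 := by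
      apply trace_CT_mul_self_zero
      rw [Matrix.conjTranspose_mul, Matrix.conjTranspose_conjTranspose]
      rw [show E * Bᴴ * (B * Eᴴ) = E * (Bᴴ * B * Eᴴ) by simp only [Matrix.mul_assoc]]
      rw [Matrix.trace_mul_comm, ← hB]
      calc (A * Eᴴ * E).trace = (A * (Eᴴ * E)).trace := by rw [Matrix.mul_assoc]
        _ = 0 := by rw [← hE]; exact htr
    rw [hB, hE]
    rw [show Bᴴ * B * (Eᴴ * E) = Bᴴ * (B * Eᴴ) * E by simp only [Matrix.mul_assoc]]
    rw [hBE, Matrix.mul_zero, Matrix.zero_mul]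
  -- `V * A * V = V`
  have hVPV : V * P * V = V := by
    rw [hVdef, hPdef]
    simp [Matrix.fromBlocks_multiply]
  have hVV : V * V = V := by
    rw [hVdef]; simp [Matrix.fromBlocks_multiply]
  have hfixH : V * (T1star V)ᴴ * V = V := by
    have h := congrArg Matrix.conjTranspose hfix
    simpa only [Matrix.conjTranspose_mul, hVH, Matrix.mul_assoc] using h
  have hVAV : V * A * V = V := by
    apply eq_of_forall_trace
    intro X
    have e1 : (X * (V * A * V)ᴴ).trace = ((V * X * V) * Aᴴ).trace := by
      calc (X * (V * A * V)ᴴ).trace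
          = (X * V * Aᴴ * V).trace := by
            simp only [Matrix.conjTranspose_mul, hVH, Matrix.mul_assoc]
        _ = (V * (X * V * Aᴴ)).trace := Matrix.trace_mul_comm _ _
        _ = ((V * X * V) * Aᴴ).trace := by simp only [Matrix.mul_assoc]
    have e2 : ((V * X * V) * Aᴴ).trace = (T1 (V * X * V) * Pᴴ).trace := (hadj _ P).symm
    have e3 : (T1 (V * X * V) * Pᴴ).trace = (T1 (V * X * V) * Vᴴ).trace := by
      calc (T1 (V * X * V) * Pᴴ).trace
          = ((V * T1 (V * X * V) * V) * P).trace := by rw [hPH, ← hinv X]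
        _ = ((V * T1 (V * X * V)) * (V * P)).trace := by simp only [Matrix.mul_assoc]
        _ = ((V * P) * (V * T1 (V * X * V))).trace := Matrix.trace_mul_comm _ _
        _ = (((V * P) * V) * T1 (V * X * V)).trace := by simp only [Matrix.mul_assoc]
        _ = (V * T1 (V * X * V)).trace := by rw [hVPV]
        _ = (T1 (V * X * V) * V).trace := Matrix.trace_mul_comm _ _
        _ = (T1 (V * X * V) * Vᴴ).trace := by rw [hVH]
    have e4 : (T1 (V * X * V) * Vᴴ).trace = ((V * X * V) * (T1star V)ᴴ).trace := hadj _ V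
    have e5 : ((V * X * V) * (T1star V)ᴴ).trace = (X * Vᴴ).trace := by
      calc ((V * X * V) * (T1star V)ᴴ).trace
          = (V * (X * (V * (T1star V)ᴴ))).trace := by simp only [Matrix.mul_assoc]
        _ = ((X * (V * (T1star V)ᴴ)) * V).trace := Matrix.trace_mul_comm _ _
        _ = (X * (V * (T1star V)ᴴ * V)).trace := by simp only [Matrix.mul_assoc]
        _ = (X * V).trace := by rw [hfixH]
        _ = (X * Vᴴ).trace := by rw [hVH]
    rw [e1, e2, e3, e4, e5]
  -- block analysis
  have hblk : A = Matrix.fromBlocks A.toBlocks₁₁ A.toBlocks₁₂ A.toBlocks₂₁ A.toBlocks₂₂ :=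
    (Matrix.fromBlocks_toBlocks A).symm
  set a := A.toBlocks₁₁ with hadef
  set b := A.toBlocks₁₂ with hbdef
  set c := A.toBlocks₂₁ with hcdef
  set d := A.toBlocks₂₂ with hddef
  have ha : a = 1 := by
    have := hVAV
    rw [hblk, hVdef] at this
    simp only [Matrix.fromBlocks_multiply, Matrix.mul_zero, Matrix.zero_mul, Matrix.mul_one,
      Matrix.one_mul, add_zero, zero_add] at this
    have := congrArg Matrix.toBlocks₁₁ this
    simpa [Matrix.toBlocks_fromBlocks₁₁] using this
  have hAQ' := hAQ
  rw [hblk, hQdef] at hAQ'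
  simp only [Matrix.fromBlocks_multiply, Matrix.mul_one, Matrix.mul_neg] at hAQ'
  have hb : b = Sᴴ := by
    have h12 := congrArg Matrix.toBlocks₁₂ hAQ'
    simp only [Matrix.toBlocks_fromBlocks₁₂] at h12
    have h12' : -(a * Sᴴ) + b = 0 := by
      have : (0 : Matrix (Fin s ⊕ Fin t) (Fin s ⊕ Fin t) ℂ).toBlocks₁₂ = 0 := rfl
      rw [this] at h12
      exact h12
    rw [ha, Matrix.one_mul] at h12'
    linear_combination (norm := module) h12'
  have hc : c = S := by
    have := congrArg Matrix.toBlocks₂₁ hblk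
    have hsym := congrArg Matrix.conjTranspose hblk
    rw [hAH, Matrix.fromBlocks_conjTranspose] at hsym
    have h21 := congrArg Matrix.toBlocks₂₁ hsym
    simp only [Matrix.toBlocks_fromBlocks₂₁] at h21
    rw [hblk] at h21
    simp only [Matrix.toBlocks_fromBlocks₂₁] at h21
    rw [h21, hb, Matrix.conjTranspose_conjTranspose]
  have hd : d = S * Sᴴ := by
    have h22 := congrArg Matrix.toBlocks₂₂ hAQ'
    simp only [Matrix.toBlocks_fromBlocks₂₂] at h22
    have h22' : -(c * Sᴴ) + d = 0 := by
      have : (0 : Matrix (Fin s ⊕ Fin t) (Fin s ⊕ Fin t) ℂ).toBlocks₂₂ = 0 := rfl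
      rw [this] at h22
      exact h22
    rw [hc] at h22'
    linear_combination (norm := module) h22'
  show A = P
  rw [hblk, ha, hb, hc, hd, hPdef]


end
end

section
/- Let B = Σ_{i=1}^n C_i⊗D_i ∈ M_k(ℂ)⊗M_m(ℂ) and define B̃ ∈ M_{mk}(ℂ)⊗M_{mk}(ℂ) by B̃ = Σ_{i=1}^n (Id_m⊗C_i)⊗(D_i⊗Id_k), where M_m⊗M_k ≅ M_{mk}. Then for every matrix M = Σ_{i,j=1}^m e_i e_j^t ⊗ B_{ij} ∈ M_m⊗M_k (with e_1,…,e_m the canonical basis of ℂ^m and B_{ij} ∈ M_k(ℂ)): G_{B̃}(M^t) = G_B( (Σ_{i=1}^m B_{ii})^t ) ⊗ Id_k, i.e., G_{B̃}(Σ_{i,j} e_j e_i^t ⊗ B_{ij}^t) = G_B(Σ_i B_{ii}^t) ⊗ Id_k. -/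
open scoped Kronecker ComplexOrder
open Matrix

noncomputable section

/-- The computation in the proof of Lemma 14: for `B = Σ Cᵢ ⊗ Dᵢ ∈ M_k ⊗ M_m`,
`B̃ = Σ (Id_m ⊗ Cᵢ) ⊗ (Dᵢ ⊗ Id_k)`, and every
`M = Σ_{i,j} e_i e_jᵗ ⊗ B_{ij} ∈ M_m ⊗ M_k`, one has
`G_{B̃}(Σ_{i,j} e_j e_iᵗ ⊗ B_{ij}ᵗ) = G_B((Σ_i B_{ii})ᵗ) ⊗ Id_k`. -/
theorem stmt13 {k m : ℕ} (n : ℕ)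
    (C : Fin n → Matrix (Fin k) (Fin k) ℂ) (D : Fin n → Matrix (Fin m) (Fin m) ℂ)
    (B : Matrix (Fin k × Fin m) (Fin k × Fin m) ℂ)
    (hB : B = ∑ i, C i ⊗ₖ D i)
    (Bij : Fin m → Fin m → Matrix (Fin k) (Fin k) ℂ) :
    Gmap (∑ i, ((1 : Matrix (Fin m) (Fin m) ℂ) ⊗ₖ C i) ⊗ₖ
        (D i ⊗ₖ (1 : Matrix (Fin k) (Fin k) ℂ)))
      (∑ i : Fin m, ∑ j : Fin m, Matrix.single j i (1 : ℂ) ⊗ₖ (Bij i j)ᵀ) =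
    Gmap B (∑ i : Fin m, Bij i i)ᵀ ⊗ₖ (1 : Matrix (Fin k) (Fin k) ℂ) := by
  subst hB
  ext ⟨j1, j2⟩ ⟨j1', j2'⟩
  simp only [Gmap, Matrix.of_apply, Matrix.sum_apply, Matrix.kroneckerMap_apply,
    Matrix.single, Matrix.one_apply, Matrix.transpose_apply,
    Fintype.sum_prod_type]
  simp only [Finset.mul_sum, Finset.sum_mul]
  rw [Finset.sum_comm]
  simp only [ite_and, mul_ite, mul_zero, mul_one, ite_mul, zero_mul, one_mul,
    Finset.sum_ite_eq, Finset.sum_ite_eq', Finset.mem_univ, if_true]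
  by_cases h : j2 = j2'
  · simp only [h, if_true, Finset.sum_ite_eq, Finset.sum_ite_eq', Finset.mem_univ, if_true]
    simp only [Finset.sum_ite_irrel, Finset.sum_const_zero, Finset.sum_ite_eq,
      Finset.sum_ite_eq', Finset.mem_univ, if_true]
    refine Finset.sum_congr rfl fun x _ => ?_
    rw [Finset.sum_comm]
    exact Finset.sum_congr rfl fun y _ => Finset.sum_comm

  · simp [h]

end
end

section
/- Let T : M_k(ℂ) → M_k(ℂ) be a completely positive map. If V ∈ M_k(ℂ) is an orthogonal projection such that T(VM_kV) ⊆ VM_kV, then T(VM_k + M_kV) ⊆ VM_k + M_kV, where VM_k + M_kV = {VX + YV : X, Y ∈ M_k(ℂ)}. -/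
open scoped Kronecker ComplexOrder
open Matrix

noncomputable section

lemma sum_mul_conjTranspose_eq_zero {r k : ℕ} (B : Fin r → Matrix (Fin k) (Fin k) ℂ)
    (h : ∑ i, B i * (B i)ᴴ = 0) (i : Fin r) : B i = 0 := by
  ext j l
  have hjj := congrFun (congrFun h j) j
  simp only [Matrix.sum_apply, Matrix.mul_apply, Matrix.conjTranspose_apply,
    Matrix.zero_apply] at hjj
  have hjj' : ∑ i, ∑ l, (Complex.normSq (B i j l) : ℝ) = 0 := by
    have := congrArg Complex.re hjj
    simpa [Complex.mul_conj] using this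
  have h0 : ∀ i ∈ Finset.univ, (0:ℝ) ≤ ∑ l, (Complex.normSq (B i j l) : ℝ) :=
    fun i _ => Finset.sum_nonneg fun _ _ => Complex.normSq_nonneg _
  have := (Finset.sum_eq_zero_iff_of_nonneg h0).mp hjj' i (Finset.mem_univ i)
  have h0' : ∀ l ∈ Finset.univ, (0:ℝ) ≤ (Complex.normSq (B i j l) : ℝ) :=
    fun _ _ => Complex.normSq_nonneg _
  have := (Finset.sum_eq_zero_iff_of_nonneg h0').mp this l (Finset.mem_univ l)
  exact Complex.normSq_eq_zero.mp this

/-- Lemma 1: if `T` is completely positive and the corner `V M V` is invariant,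
then `V M + M V` is invariant. -/
theorem stmt15 {k : ℕ}
    (T : Matrix (Fin k) (Fin k) ℂ → Matrix (Fin k) (Fin k) ℂ) (hT : IsCPMap T)
    (V : Matrix (Fin k) (Fin k) ℂ) (hV : IsOrthProj V)
    (hinv : LeavesInv T V) :
    ∀ Z : Matrix (Fin k) (Fin k) ℂ,
      (∃ X Y : Matrix (Fin k) (Fin k) ℂ, Z = V * X + Y * V) →
      ∃ X' Y' : Matrix (Fin k) (Fin k) ℂ, T Z = V * X' + Y' * V := by
  obtain ⟨r, A, hA⟩ := hT
  obtain ⟨hHerm, hidem⟩ := hV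
  set P : Matrix (Fin k) (Fin k) ℂ := 1 - V with hP
  have hPV : P * V = 0 := by rw [hP, Matrix.sub_mul, Matrix.one_mul, hidem, sub_self]
  have hVP : V * P = 0 := by rw [hP, Matrix.mul_sub, Matrix.mul_one, hidem, sub_self]
  have hPH : Pᴴ = P := by rw [hP, Matrix.conjTranspose_sub, Matrix.conjTranspose_one, hHerm.eq]
  -- Key: P * A i * V = 0 for all i
  have hkey : ∀ i, P * A i * V = 0 := by
    have hTV : T V = V * T V * V := by
      have := hinv 1
      simpa [Matrix.mul_one, hidem] using this
    have hsum : ∑ i, (P * A i * V) * (P * A i * V)ᴴ = 0 := by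
      have : P * T V * P = 0 := by
        rw [hTV]
        rw [show P * (V * T V * V) * P = (P * V) * T V * (V * P) by
          noncomm_ring]
        rw [hPV, hVP, Matrix.zero_mul, Matrix.mul_zero]
      rw [hA] at this
      rw [← this, Finset.mul_sum, Finset.sum_mul]
      refine Finset.sum_congr rfl fun i _ => ?_
      have hct : (P * A i * V)ᴴ = V * (A i)ᴴ * P := by
        simp [Matrix.conjTranspose_mul, hPH, hHerm.eq, Matrix.mul_assoc]
      rw [hct]
      calc (P * A i * V) * (V * (A i)ᴴ * P)
          = P * (A i * (V * V) * (A i)ᴴ) * P := by noncomm_ring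
        _ = P * (A i * V * (A i)ᴴ) * P := by rw [hidem]
    exact fun i => sum_mul_conjTranspose_eq_zero _ hsum i
  intro Z ⟨X, Y, hZ⟩
  have hVAP : ∀ i, V * (A i)ᴴ * P = 0 := by
    intro i
    have := congrArg Matrix.conjTranspose (hkey i)
    simpa [Matrix.conjTranspose_mul, hPH, hHerm.eq, Matrix.mul_assoc] using this
  have hcorner : P * T Z * P = 0 := by
    rw [hA, Finset.mul_sum, Finset.sum_mul]
    refine Finset.sum_eq_zero fun i _ => ?_
    rw [hZ]
    calc P * (A i * (V * X + Y * V) * (A i)ᴴ) * P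
        = (P * A i * V) * (X * ((A i)ᴴ * P)) + (P * A i) * Y * (V * (A i)ᴴ * P) := by
          noncomm_ring
      _ = 0 := by rw [hkey i, hVAP i, Matrix.zero_mul, Matrix.mul_zero]; simp
  refine ⟨T Z, P * T Z, ?_⟩
  have h1 : T Z = T Z - P * T Z * P := by rw [hcorner, sub_zero]
  conv_lhs => rw [h1]
  rw [hP]
  noncomm_ring


end
end
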